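/- arXiv:2012.05951 — 6 statements merged into one kernel-verified Lean document; each statement's English description precedes it below -/
import Mathlib

section
/- Fix n ≥ 1, d ≥ 2, and d ≤ k ≤ n(d−1). Write k = q(d−1) + r with 0 ≤ r < d−1. Then among all monomials of degree k in n variables not divisible by any x_i^d, the monomial m(n,d,k) = x₁^(d−1)⋯x_q^(d−1)·x_{q+1}^r has the minimum number of monomial divisors of degree d. -/
/-- The number of monomial divisors of degree `d` of the monomial with exponent vector `v`:
exponent vectors `a ≤ v` (componentwise) of total degree `d`. -/
def divCount {n : ℕ} (d : ℕ) (v : Fin n → ℕ) : ℕ :=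
  ((Finset.Iic v).filter fun a => ∑ i, a i = d).card

/-- The exponent vector of `m(n,d,k) = x₁^(d-1) ⋯ x_q^(d-1) x_{q+1}^r`. -/
def mExp (n d q r : ℕ) : Fin n → ℕ := fun i =>
  if (i : ℕ) < q then d - 1 else if (i : ℕ) = q then r else 0

open Finset

lemma divCount_perm {n d : ℕ} (v : Fin n → ℕ) (σ : Equiv.Perm (Fin n)) :
    divCount d (v ∘ ⇑σ) = divCount d v := by
  unfold divCount
  apply Finset.card_nbij' (fun b => b ∘ ⇑σ⁻¹) (fun b => b ∘ ⇑σ)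
  · intro b hb
    simp only [Finset.mem_coe, mem_filter, Finset.mem_Iic] at hb ⊢
    constructor
    · intro i
      have := hb.1 (σ⁻¹ i)
      simpa using this
    · rw [← hb.2]
      exact Equiv.sum_comp σ⁻¹ b
  · intro b hb
    simp only [Finset.mem_coe, mem_filter, Finset.mem_Iic] at hb ⊢
    constructor
    · intro i; exact hb.1 (σ i)
    · rw [← hb.2]; exact Equiv.sum_comp σ b
  · intro b _; funext i; simp
  · intro b _; funext i; simp

lemma sum_update₂ {n : ℕ} (w : Fin n → ℕ) {i j : Fin n} (hij : j ≠ i) (X Y : ℕ) :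
    ∑ k, Function.update (Function.update w i X) j Y k
      = X + Y + ∑ k ∈ (Finset.univ.erase j).erase i, w k := by
  rw [Finset.sum_update_of_mem (Finset.mem_univ j)]
  rw [show (Finset.univ : Finset (Fin n)) \ {j} = Finset.univ.erase j by
    simp [Finset.sdiff_singleton_eq_erase]]
  rw [Finset.sum_update_of_mem (Finset.mem_erase.2 ⟨Ne.symm hij, Finset.mem_univ i⟩)]
  rw [show (Finset.univ.erase j) \ {i} = (Finset.univ.erase j).erase i by
    simp [Finset.sdiff_singleton_eq_erase]]
  ring

lemma sum_self₂ {n : ℕ} (w : Fin n → ℕ) {i j : Fin n} (hij : j ≠ i) :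
    ∑ k, w k = w i + w j + ∑ k ∈ (Finset.univ.erase j).erase i, w k := by
  have := sum_update₂ w hij (w i) (w j)
  simpa using this

lemma exchange {n d : ℕ} (v : Fin n → ℕ) {i j : Fin n} (hij : i ≠ j)
    (h1 : 1 ≤ v j) (h2 : v j ≤ v i) :
    divCount d (Function.update (Function.update v i (v i + 1)) j (v j - 1)) ≤ divCount d v := by
  set v' := Function.update (Function.update v i (v i + 1)) j (v j - 1) with hv'
  clear_value v'
  have hv'i : v' i = v i + 1 := by
    rw [hv', Function.update_of_ne hij, Function.update_self]
  have hv'j : v' j = v j - 1 := by rw [hv', Function.update_self]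
  have hv'k : ∀ k, k ≠ i → k ≠ j → v' k = v k := by
    intro k hki hkj
    rw [hv', Function.update_of_ne hkj, Function.update_of_ne hki]
  -- the map
  set f : (Fin n → ℕ) → (Fin n → ℕ) := fun b =>
    if b i ≤ v i then b
    else Function.update (Function.update b i (b i + b j - v j)) j (v j) with hf
  clear_value f
  unfold divCount
  apply Finset.card_le_card_of_injOn f
  · -- maps to target
    intro b hb
    simp only [Finset.mem_coe, Finset.mem_filter, Finset.mem_Iic] at hb ⊢
    obtain ⟨hble, hbsum⟩ := hb
    have hbi : b i ≤ v i + 1 := by have := hble i; rwa [hv'i] at this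
    have hbj : b j ≤ v j - 1 := by have := hble j; rwa [hv'j] at this
    by_cases hcase : b i ≤ v i
    · have hfb : f b = b := by rw [hf]; simp [hcase]
      rw [hfb]
      refine ⟨?_, hbsum⟩
      intro k
      by_cases hki : k = i
      · subst hki; exact hcase
      by_cases hkj : k = j
      · subst hkj; exact le_trans hbj (Nat.sub_le _ _)
      · rw [← hv'k k hki hkj]; exact hble k
    · have hfb : f b = Function.update (Function.update b i (b i + b j - v j)) j (v j) := by
        rw [hf]; simp [hcase]
      have hbieq : b i = v i + 1 := by omega
      rw [hfb]
      constructor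
      · intro k
        by_cases hkj : k = j
        · subst hkj; rw [Function.update_self]
        by_cases hki : k = i
        · rw [hki, Function.update_of_ne hij, Function.update_self]
          exact (by omega : b i + b j - v j ≤ v i)
        · rw [Function.update_of_ne hkj, Function.update_of_ne hki]
          rw [← hv'k k hki hkj]; exact hble k
      · rw [sum_update₂ b (Ne.symm hij)]
        have hdecomp := sum_self₂ b (i := i) (j := j) (Ne.symm hij)
        omega
  · -- injective
    intro b₁ hb₁ b₂ hb₂ heq
    simp only [Finset.coe_filter, Set.mem_setOf_eq, Finset.mem_Iic] at hb₁ hb₂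
    obtain ⟨hb₁le, _⟩ := hb₁
    obtain ⟨hb₂le, _⟩ := hb₂
    have hb₁j : b₁ j ≤ v j - 1 := by have := hb₁le j; rwa [hv'j] at this
    have hb₂j : b₂ j ≤ v j - 1 := by have := hb₂le j; rwa [hv'j] at this
    have hb₁i : b₁ i ≤ v i + 1 := by have := hb₁le i; rwa [hv'i] at this
    have hb₂i : b₂ i ≤ v i + 1 := by have := hb₂le i; rwa [hv'i] at this
    by_cases hc₁ : b₁ i ≤ v i <;> by_cases hc₂ : b₂ i ≤ v i
    · rw [hf] at heq; simpa [hc₁, hc₂] using heq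
    · exfalso
      rw [hf] at heq; simp only [hc₁, hc₂, if_true, if_false] at heq
      have := congrFun heq j
      rw [Function.update_self] at this
      omega
    · exfalso
      rw [hf] at heq; simp only [hc₁, hc₂, if_true, if_false] at heq
      have := congrFun heq j
      rw [Function.update_self] at this
      omega
    · rw [hf] at heq; simp only [hc₁, hc₂, if_false] at heq
      funext k
      by_cases hki : k = i
      · subst hki; omega
      by_cases hkj : k = j
      · subst hkj
        have := congrFun heq i
        rw [Function.update_of_ne hij, Function.update_self,
          Function.update_of_ne hij, Function.update_self] at this
        omega
      · have := congrFun heq k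
        rwa [Function.update_of_ne hkj, Function.update_of_ne hki,
          Function.update_of_ne hkj, Function.update_of_ne hki] at this

/-- canonical monotone vector: zeros, then s, then q' copies of d-1 -/
def cVec (n d q' s : ℕ) : Fin n → ℕ := fun i =>
  if (i : ℕ) + q' < n then (if (i : ℕ) + q' + 1 = n then s else 0) else d - 1

lemma cVec_eq_mExp_comp (n d q r : ℕ) (hq : q ≤ n) :
    cVec n d q r = mExp n d q r ∘ ⇑(Fin.revPerm (n := n)) := by
  funext i
  have hi : (i : ℕ) < n := i.isLt
  simp only [cVec, mExp, Function.comp_apply, Fin.revPerm_apply, Fin.val_rev]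
  split_ifs <;> omega

lemma sum_cVec (n d q' s : ℕ) (hq : q' ≤ n) (hqn : q' = n → s = 0) :
    ∑ i, cVec n d q' s i = q' * (d - 1) + s := by
  simp only [cVec]
  rw [Fin.sum_univ_eq_sum_range (fun m => if m + q' < n then (if m + q' + 1 = n then s else 0) else d - 1)]
  have hsplit : ∀ m ∈ Finset.range n,
      (if m + q' < n then (if m + q' + 1 = n then s else 0) else d - 1)
        = (if n ≤ m + q' then d - 1 else 0) + (if m + q' + 1 = n then s else 0) := by
    intro m hm
    split_ifs <;> omega
  rw [Finset.sum_congr rfl hsplit, Finset.sum_add_distrib]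
  congr 1
  · have h1 : ∀ m ∈ Finset.range n, (if n ≤ m + q' then (d-1 : ℕ) else 0)
        = if m ∈ Finset.Ico (n - q') n then d - 1 else 0 := by
      intro m hm
      simp only [Finset.mem_range] at hm
      simp only [Finset.mem_Ico]
      rcases le_or_gt n (m + q') with h | h
      · rw [if_pos h, if_pos (by omega)]
      · rw [if_neg (by omega), if_neg (by omega)]
    rw [Finset.sum_congr rfl h1, Finset.sum_ite_mem]
    have : Finset.range n ∩ Finset.Ico (n - q') n = Finset.Ico (n - q') n := by
      rw [Finset.range_eq_Ico]
      apply Finset.inter_eq_right.2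
      intro x hx
      simp only [Finset.mem_Ico] at *
      omega
    rw [this, Finset.sum_const, Nat.card_Ico, smul_eq_mul,
      show n - (n - q') = q' from by omega, Nat.mul_comm]
  · rcases eq_or_lt_of_le hq with h | h
    · have hs : s = 0 := hqn h
      subst hs
      simp
    · rw [Finset.sum_eq_single (n - q' - 1)]
      · rw [if_pos (by omega)]
      · intro m hm hne
        simp only [Finset.mem_range] at hm
        rw [if_neg (by omega)]
      · intro hmem
        simp only [Finset.mem_range] at hmem
        omega

lemma div_uniq {e q₁ s q r : ℕ} (he : 1 ≤ e) (hs : s < e) (hr : r < e)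
    (h : q₁ * e + s = q * e + r) : q₁ = q ∧ s = r := by
  have h1 : (q₁ * e + s) % e = s := by
    rw [Nat.mul_comm, Nat.mul_add_mod, Nat.mod_eq_of_lt hs]
  have h2 : (q * e + r) % e = r := by
    rw [Nat.mul_comm, Nat.mul_add_mod, Nat.mod_eq_of_lt hr]
  have hsr : s = r := by rw [← h1, ← h2, h]
  have hqe : q₁ * e = q * e := by omega
  exact ⟨Nat.eq_of_mul_eq_mul_right (by omega) hqe, hsr⟩

lemma classify {n d q r : ℕ} (hd : 2 ≤ d) (hr : r < d - 1) (hq : q ≤ n) (hqn : q = n → r = 0)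
    (b : Fin n → ℕ) (mono : Monotone b) (hb : ∀ i, b i ≤ d - 1)
    (hsum : ∑ i, b i = q * (d - 1) + r)
    (hnp : ¬ ∃ i j : Fin n, i ≠ j ∧ 1 ≤ b j ∧ b j ≤ b i ∧ b i ≤ d - 2) :
    b = cVec n d q r := by
  have fact1 : ∀ i j : Fin n, i < j → 1 ≤ b i → b j = d - 1 := by
    intro i j hlt h1
    have hle : b i ≤ b j := mono (le_of_lt hlt)
    by_contra hne
    exact hnp ⟨j, i, hlt.ne', h1, hle, by have := hb j; omega⟩
  have hup : ∀ i j : Fin n, i ≤ j → b i = d - 1 → b j = d - 1 := by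
    intro i j hle hbi
    have h1 := mono hle
    have h2 := hb j
    omega
  set A := Finset.univ.filter (fun i => b i = d - 1) with hA
  set q₁ := A.card with hq₁
  have hmemA : ∀ i : Fin n, i ∈ A ↔ b i = d - 1 := by
    intro i; simp [hA]
  have hq₁n : q₁ ≤ n := by
    have := Finset.card_filter_le Finset.univ (fun i => b i = d - 1)
    simpa [hq₁, hA] using this
  have hiff : ∀ i : Fin n, b i = d - 1 ↔ n - q₁ ≤ (i : ℕ) := by
    intro i
    constructor
    · intro hbi
      have hsub : Finset.Ici i ⊆ A := by
        intro j hj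
        exact (hmemA j).2 (hup i j (Finset.mem_Ici.1 hj) hbi)
      have hcard := Finset.card_le_card hsub
      rw [Fin.card_Ici] at hcard
      omega
    · intro hge
      by_contra hni
      have hsub : A ⊆ Finset.Ioi i := by
        intro j hj
        rw [Finset.mem_Ioi]
        by_contra hle
        exact hni (hup j i (le_of_not_gt hle) ((hmemA j).1 hj))
      have hcard := Finset.card_le_card hsub
      rw [Fin.card_Ioi] at hcard
      have := i.isLt
      omega
  have h0 : ∀ i : Fin n, (i : ℕ) + q₁ + 1 < n → b i = 0 := by
    intro i hi
    by_contra hne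
    have h1 : 1 ≤ b i := by omega
    have hlt : (i : ℕ) + 1 < n := by omega
    have hbj := fact1 i ⟨(i : ℕ) + 1, hlt⟩ (by simp [Fin.lt_def]) h1
    have := (hiff _).1 hbj
    simp only at this
    omega
  by_cases hq₁c : q₁ = n
  · have hball : ∀ i : Fin n, b i = d - 1 := fun i => (hiff i).2 (by omega)
    have hbC : b = cVec n d q₁ 0 := by
      funext i
      rw [hball i]
      simp only [cVec]
      rw [if_neg (by have := i.isLt; omega)]
    rw [hbC, sum_cVec n d q₁ 0 hq₁n (fun _ => rfl)] at hsum
    obtain ⟨hqq, hrr⟩ := div_uniq (e := d - 1) (by omega) (by omega) hr hsum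
    rw [hbC, hqq, hrr]
  · have hq₁lt : q₁ < n := lt_of_le_of_ne hq₁n hq₁c
    set i₀ : Fin n := ⟨n - q₁ - 1, by omega⟩ with hi₀
    set s := b i₀ with hs
    have hsd : s ≤ d - 2 := by
      have h1 := hb i₀
      have h2 : ¬ (n - q₁ ≤ (i₀ : ℕ)) := by simp only [hi₀]; omega
      by_contra hcon
      have h4 : b i₀ = d - 1 := by omega
      exact h2 ((hiff i₀).1 h4)
    have hbC : b = cVec n d q₁ s := by
      funext i
      rcases lt_trichotomy ((i : ℕ) + q₁ + 1) n with h | h | h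
      · rw [h0 i (by omega)]
        simp only [cVec]
        rw [if_pos (by omega), if_neg (by omega)]
      · have hii : i = i₀ := Fin.ext (by simp only [hi₀]; omega)
        simp only [cVec]
        rw [if_pos (by omega), if_pos h, hii, hs]
      · have hbi : b i = d - 1 := (hiff i).2 (by omega)
        rw [hbi]
        simp only [cVec]
        rw [if_neg (by omega)]
    rw [hbC, sum_cVec n d q₁ s hq₁n (fun h => absurd h hq₁c)] at hsum
    obtain ⟨hqq, hrr⟩ := div_uniq (e := d - 1) (by omega) (by omega) hr hsum
    rw [hbC, hqq, hrr]

lemma sum_comp_update₂ {n : ℕ} (f : ℕ → ℕ) (w : Fin n → ℕ) {i j : Fin n} (hij : j ≠ i)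
    (X Y : ℕ) :
    ∑ k, f (Function.update (Function.update w i X) j Y k)
      = f X + f Y + ∑ k ∈ (Finset.univ.erase j).erase i, f (w k) := by
  have h : ∀ k, f (Function.update (Function.update w i X) j Y k)
      = Function.update (Function.update (f ∘ w) i (f X)) j (f Y) k := by
    intro k
    rw [← Function.comp_update, ← Function.comp_update]
    rfl
  rw [Finset.sum_congr rfl (fun k _ => h k), sum_update₂ (f ∘ w) hij (f X) (f Y)]
  rfl

lemma sum_comp_self₂ {n : ℕ} (f : ℕ → ℕ) (w : Fin n → ℕ) {i j : Fin n} (hij : j ≠ i) :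
    ∑ k, f (w k) = f (w i) + f (w j) + ∑ k ∈ (Finset.univ.erase j).erase i, f (w k) := by
  have := sum_comp_update₂ f w hij (w i) (w j)
  simpa using this

lemma terminal {n d q r : ℕ} (hd : 2 ≤ d) (hr : r < d - 1) (hq : q ≤ n) (hqn : q = n → r = 0)
    (a : Fin n → ℕ) (ha : ∀ i, a i ≤ d - 1) (hsum : ∑ i, a i = q * (d - 1) + r)
    (hnp : ¬ ∃ i j : Fin n, i ≠ j ∧ 1 ≤ a j ∧ a j ≤ a i ∧ a i ≤ d - 2) :
    divCount d (mExp n d q r) = divCount d a := by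
  set σ := Tuple.sort a with hσ
  set b := a ∘ ⇑σ with hb
  have mono : Monotone b := Tuple.monotone_sort a
  have hble : ∀ i, b i ≤ d - 1 := fun i => ha _
  have hbsum : ∑ i, b i = q * (d - 1) + r := by
    rw [← hsum]
    exact Equiv.sum_comp σ a
  have hbnp : ¬ ∃ i j : Fin n, i ≠ j ∧ 1 ≤ b j ∧ b j ≤ b i ∧ b i ≤ d - 2 := by
    rintro ⟨i, j, hij, h1, h2, h3⟩
    exact hnp ⟨σ i, σ j, fun h => hij (σ.injective h), h1, h2, h3⟩
  have hclass : b = cVec n d q r := classify hd hr hq hqn b mono hble hbsum hbnp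
  have e1 : divCount d b = divCount d a := divCount_perm a σ
  have e2 : divCount d (cVec n d q r) = divCount d (mExp n d q r) := by
    rw [cVec_eq_mExp_comp n d q r hq]
    exact divCount_perm (mExp n d q r) Fin.revPerm
  rw [← e1, hclass, e2]

lemma main_aux (n d q r : ℕ) (hd : 2 ≤ d) (hr : r < d - 1) (hq : q ≤ n) (hqn : q = n → r = 0) :
    ∀ N : ℕ, ∀ a : Fin n → ℕ, (∀ i, a i ≤ d - 1) → (∑ i, a i = q * (d - 1) + r) →
      n * (d - 1) ^ 2 - ∑ i, (a i) ^ 2 ≤ N →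
      divCount d (mExp n d q r) ≤ divCount d a := by
  intro N
  induction N with
  | zero =>
    intro a ha hsum hm
    by_cases hpair : ∃ i j : Fin n, i ≠ j ∧ 1 ≤ a j ∧ a j ≤ a i ∧ a i ≤ d - 2
    · exfalso
      obtain ⟨i, j, hij, h1, h2, h3⟩ := hpair
      set a' := Function.update (Function.update a i (a i + 1)) j (a j - 1) with ha'def
      have ha' : ∀ k, a' k ≤ d - 1 := by
        intro k
        by_cases hkj : k = j
        · rw [ha'def, hkj, Function.update_self]
          have := ha j; omega
        by_cases hki : k = i
        · rw [ha'def, hki, Function.update_of_ne hij, Function.update_self]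
          omega
        · rw [ha'def, Function.update_of_ne hkj, Function.update_of_ne hki]
          exact ha k
      have hsq' : ∑ k, (a' k) ^ 2 = (a i + 1) ^ 2 + (a j - 1) ^ 2
          + ∑ k ∈ (Finset.univ.erase j).erase i, (a k) ^ 2 := by
        rw [ha'def]
        exact sum_comp_update₂ (fun x => x ^ 2) a (Ne.symm hij) _ _
      have hsq : ∑ k, (a k) ^ 2 = (a i) ^ 2 + (a j) ^ 2
          + ∑ k ∈ (Finset.univ.erase j).erase i, (a k) ^ 2 :=
        sum_comp_self₂ (fun x => x ^ 2) a (Ne.symm hij)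
      have hkey : (a i) ^ 2 + (a j) ^ 2 + 2 ≤ (a i + 1) ^ 2 + (a j - 1) ^ 2 := by
        obtain ⟨z, hz⟩ := Nat.exists_eq_add_of_le h1
        have e1 : (a i + 1) ^ 2 = (a i) ^ 2 + 2 * a i + 1 := by ring
        have e2 : (a j) ^ 2 = z ^ 2 + 2 * z + 1 := by rw [hz]; ring
        have e3 : (a j - 1) ^ 2 = z ^ 2 := by rw [hz]; norm_num
        omega
      have hub : ∑ k, (a' k) ^ 2 ≤ n * (d - 1) ^ 2 := by
        calc ∑ k, (a' k) ^ 2 ≤ ∑ _k : Fin n, (d - 1) ^ 2 :=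
              Finset.sum_le_sum (fun k _ => Nat.pow_le_pow_left (ha' k) 2)
          _ = n * (d - 1) ^ 2 := by
              rw [Finset.sum_const, Finset.card_univ, Fintype.card_fin, smul_eq_mul]
      omega
    · exact le_of_eq (terminal hd hr hq hqn a ha hsum hpair)
  | succ N ih =>
    intro a ha hsum hm
    by_cases hpair : ∃ i j : Fin n, i ≠ j ∧ 1 ≤ a j ∧ a j ≤ a i ∧ a i ≤ d - 2
    · obtain ⟨i, j, hij, h1, h2, h3⟩ := hpair
      set a' := Function.update (Function.update a i (a i + 1)) j (a j - 1) with ha'def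
      have ha' : ∀ k, a' k ≤ d - 1 := by
        intro k
        by_cases hkj : k = j
        · rw [ha'def, hkj, Function.update_self]
          have := ha j; omega
        by_cases hki : k = i
        · rw [ha'def, hki, Function.update_of_ne hij, Function.update_self]
          omega
        · rw [ha'def, Function.update_of_ne hkj, Function.update_of_ne hki]
          exact ha k
      have hsum' : ∑ k, a' k = q * (d - 1) + r := by
        rw [ha'def, sum_update₂ a (Ne.symm hij)]
        have := sum_self₂ a (i := i) (j := j) (Ne.symm hij)
        omega
      have hsq' : ∑ k, (a' k) ^ 2 = (a i + 1) ^ 2 + (a j - 1) ^ 2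
          + ∑ k ∈ (Finset.univ.erase j).erase i, (a k) ^ 2 := by
        rw [ha'def]
        exact sum_comp_update₂ (fun x => x ^ 2) a (Ne.symm hij) _ _
      have hsq : ∑ k, (a k) ^ 2 = (a i) ^ 2 + (a j) ^ 2
          + ∑ k ∈ (Finset.univ.erase j).erase i, (a k) ^ 2 :=
        sum_comp_self₂ (fun x => x ^ 2) a (Ne.symm hij)
      have hkey : (a i) ^ 2 + (a j) ^ 2 + 2 ≤ (a i + 1) ^ 2 + (a j - 1) ^ 2 := by
        obtain ⟨z, hz⟩ := Nat.exists_eq_add_of_le h1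
        have e1 : (a i + 1) ^ 2 = (a i) ^ 2 + 2 * a i + 1 := by ring
        have e2 : (a j) ^ 2 = z ^ 2 + 2 * z + 1 := by rw [hz]; ring
        have e3 : (a j - 1) ^ 2 = z ^ 2 := by rw [hz]; norm_num
        omega
      have hub : ∑ k, (a' k) ^ 2 ≤ n * (d - 1) ^ 2 := by
        calc ∑ k, (a' k) ^ 2 ≤ ∑ _k : Fin n, (d - 1) ^ 2 :=
              Finset.sum_le_sum (fun k _ => Nat.pow_le_pow_left (ha' k) 2)
          _ = n * (d - 1) ^ 2 := by
              rw [Finset.sum_const, Finset.card_univ, Fintype.card_fin, smul_eq_mul]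
      have hm' : n * (d - 1) ^ 2 - ∑ k, (a' k) ^ 2 ≤ N := by omega
      calc divCount d (mExp n d q r) ≤ divCount d a' := ih a' ha' hsum' hm'
        _ ≤ divCount d a := by
            rw [ha'def]
            exact exchange a hij h1 h2
    · exact le_of_eq (terminal hd hr hq hqn a ha hsum hpair)

/-- For `n ≥ 1`, `d ≥ 2`, `d ≤ k ≤ n(d-1)` with `k = q(d-1) + r`, `0 ≤ r < d-1`:
among all monomials of degree `k` in `n` variables not divisible by any `x_i^d`,
the monomial `m(n,d,k) = x₁^(d-1) ⋯ x_q^(d-1) x_{q+1}^r` has the minimum number of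
monomial divisors of degree `d`. -/
theorem stmt_4 (n d k q r : ℕ) (hn : 1 ≤ n) (hd : 2 ≤ d) (hdk : d ≤ k)
    (hk : k ≤ n * (d - 1)) (hqr : k = q * (d - 1) + r) (hr : r < d - 1)
    (a : Fin n → ℕ) (ha : ∀ i, a i ≤ d - 1) (hadeg : ∑ i, a i = k) :
    divCount d (mExp n d q r) ≤ divCount d a := by
  have e1 : 1 ≤ d - 1 := by omega
  have hq : q ≤ n := by
    by_contra hcon
    have h1 : (n + 1) * (d - 1) ≤ q * (d - 1) := Nat.mul_le_mul_right _ (by omega)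
    have h2 : (n + 1) * (d - 1) = n * (d - 1) + (d - 1) := by ring
    omega
  have hqn : q = n → r = 0 := by
    intro h
    subst h
    omega
  have hsum : ∑ i, a i = q * (d - 1) + r := by rw [hadeg, hqr]
  exact main_aux n d q r hd hr hq hqn (n * (d - 1) ^ 2) a ha hsum (Nat.sub_le _ _)
end

section
/- Fix n ≥ 1, d ≥ 2, and d ≤ k ≤ n(d−1), and write k = q(d−1) + r with 0 ≤ r < d−1. The number of monomials of degree d in n variables dividing m(n,d,k) = x₁^(d−1)⋯x_q^(d−1)·x_{q+1}^r equals C(n,d,k) = binom(q+d, d) − binom(q+d−r−1, q) − q. -/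
open Finset

lemma hockey (m : ℕ) : ∀ s : ℕ, ∑ t ∈ Finset.range (s+1), (t + m - 1).choose t = (s + m).choose s := by
  intro s
  induction s with
  | zero => simp
  | succ s ih =>
    rw [Finset.sum_range_succ, ih]
    have h1 : s + 1 + m - 1 = s + m := by omega
    rw [h1]
    have : s + 1 + m = (s + m) + 1 := by omega
    rw [this, Nat.choose_succ_succ]

lemma sum_erase_eq {n : ℕ} (a : Fin n → ℕ) (p : Fin n) :
    ∑ i, a i = a p + ∑ i ∈ Finset.univ.erase p, a i :=
  (Finset.add_sum_erase _ a (Finset.mem_univ p)).symm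

lemma sum_update_eq {n : ℕ} (a : Fin n → ℕ) (p : Fin n) (x : ℕ) :
    ∑ i, Function.update a p x i = x + ∑ i ∈ Finset.univ.erase p, a i := by
  rw [Finset.sum_update_of_mem (Finset.mem_univ p)]
  congr 1
  · rw [Finset.sdiff_singleton_eq_erase]

lemma SB {n : ℕ} : ∀ (m : ℕ) (s : ℕ) (c : Fin n → ℕ), m ≤ n →
    (∀ i : Fin n, (i:ℕ) < m → s ≤ c i) → (∀ i : Fin n, m ≤ (i:ℕ) → c i = 0) →
    ((Finset.Iic c).filter fun a => ∑ i, a i = s).card = (s + m - 1).choose s := by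
  intro m
  induction m with
  | zero =>
    intro s c _ _ hc0
    have hc : c = 0 := funext fun i => hc0 i (Nat.zero_le _)
    subst hc
    match s with
    | 0 =>
      have : ((Finset.Iic (0 : Fin n → ℕ)).filter fun a => ∑ i, a i = 0) = {0} := by
        ext a
        simp only [Finset.mem_filter, Finset.mem_Iic, Finset.mem_singleton]
        constructor
        · rintro ⟨h, -⟩; exact le_antisymm h zero_le
        · rintro rfl; simp
      rw [this]; simp
    | (s+1) =>
      have : ((Finset.Iic (0 : Fin n → ℕ)).filter fun a => ∑ i, a i = s + 1) = ∅ := by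
        ext a
        simp only [Finset.mem_filter, Finset.mem_Iic, Finset.notMem_empty, iff_false, not_and]
        intro ha
        have : a = 0 := le_antisymm ha zero_le
        subst this; simp
      rw [this]
      simp [Nat.choose_eq_zero_of_lt (by omega : s < s + 1)]
  | succ m ih =>
    intro s c hmn hc hc0
    have hm : m < n := hmn
    obtain ⟨p, hpv⟩ : ∃ p : Fin n, (p : ℕ) = m := ⟨⟨m, hm⟩, rfl⟩
    have hmem : ∀ a ∈ (Finset.Iic c).filter fun a => ∑ i, a i = s, a p ∈ Finset.range (s+1) := by
      intro a ha
      rw [Finset.mem_filter] at ha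
      rw [Finset.mem_range, Nat.lt_succ_iff, ← ha.2]
      exact Finset.single_le_sum (fun i _ => Nat.zero_le _) (Finset.mem_univ p)
    rw [Finset.card_eq_sum_card_fiberwise hmem]
    have key : ∀ j ∈ Finset.range (s+1),
        (((Finset.Iic c).filter fun a => ∑ i, a i = s).filter fun a => a p = j).card
          = (s - j + m - 1).choose (s - j) := by
      intro j hj
      rw [Finset.mem_range, Nat.lt_succ_iff] at hj
      obtain ⟨c', hc'⟩ : ∃ c' : Fin n → ℕ, c' = Function.update c p 0 := ⟨_, rfl⟩
      have step : (((Finset.Iic c).filter fun a => ∑ i, a i = s).filter fun a => a p = j).card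
          = ((Finset.Iic c').filter fun a => ∑ i, a i = s - j).card := by
        refine Finset.card_bij' (fun a _ => Function.update a p 0)
          (fun b _ => Function.update b p j) ?_ ?_ ?_ ?_
        · intro a ha
          simp only [Finset.mem_filter, Finset.mem_Iic, Pi.le_def] at ha ⊢
          obtain ⟨⟨hle, hsum⟩, hap⟩ := ha
          refine ⟨fun i => ?_, ?_⟩
          · by_cases hi : i = p
            · subst hi; simp
            · rw [Function.update_of_ne hi, hc', Function.update_of_ne hi]
              exact hle i
          · rw [sum_update_eq]
            have h2 := sum_erase_eq a p
            omega
        · intro b hb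
          simp only [Finset.mem_filter, Finset.mem_Iic, Pi.le_def] at hb ⊢
          obtain ⟨hle, hsum⟩ := hb
          have hbp : b p = 0 := by
            have := hle p
            rw [hc'] at this; simpa using this
          refine ⟨⟨fun i => ?_, ?_⟩, by simp⟩
          · by_cases hi : i = p
            · rw [hi, Function.update_self]
              exact le_trans hj (hc p (by omega))
            · rw [Function.update_of_ne hi]
              have := hle i
              rwa [hc', Function.update_of_ne hi] at this
          · rw [sum_update_eq]
            have h2 := sum_erase_eq b p
            omega
        · intro a ha
          simp only [Finset.mem_filter] at ha
          funext i
          by_cases hi : i = p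
          · subst hi; simp [ha.2]
          · simp only [Function.update_of_ne hi]
        · intro b hb
          simp only [Finset.mem_filter, Finset.mem_Iic, Pi.le_def] at hb
          have hbp : b p = 0 := by
            have := hb.1 p
            rw [hc'] at this; simpa using this
          funext i
          by_cases hi : i = p
          · subst hi; simp [hbp]
          · simp only [Function.update_of_ne hi]
      rw [step]
      apply ih (s - j) c' (le_of_lt hm)
      · intro i hi
        have hip : i ≠ p := by
          intro h; rw [h] at hi; clear * - hi hpv; omega
        rw [hc', Function.update_of_ne hip]
        exact le_trans (Nat.sub_le s j) (hc i (by clear * - hi; omega))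
      · intro i hi
        by_cases hip : i = p
        · subst hip; rw [hc']; simp
        · rw [hc', Function.update_of_ne hip]
          apply hc0 i
          have hnm : (i:ℕ) ≠ m := fun h => hip (Fin.ext (h.trans hpv.symm))
          clear * - hi hnm; omega
    have hrefl := Finset.sum_range_reflect (fun t => (t + m - 1).choose t) (s+1)
    simp only [Nat.add_sub_cancel] at hrefl
    calc ∑ j ∈ Finset.range (s+1),
          (((Finset.Iic c).filter fun a => ∑ i, a i = s).filter fun a => a p = j).card
        = ∑ j ∈ Finset.range (s+1), (s - j + m - 1).choose (s - j) := Finset.sum_congr rfl key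
      _ = ∑ j ∈ Finset.range (s+1), (j + m - 1).choose j := hrefl
      _ = (s + m).choose s := hockey m s
      _ = (s + (m+1) - 1).choose s := by congr 1

/-- For `n ≥ 1`, `d ≥ 2`, `d ≤ k ≤ n(d-1)` with `k = q(d-1) + r`, `0 ≤ r < d-1`:
the number of degree-`d` monomial divisors of `m(n,d,k)` equals
`C(n,d,k) = binom(q+d, d) − binom(q+d−r−1, q) − q`. -/
theorem stmt_5 (n d k q r : ℕ) (hn : 1 ≤ n) (hd : 2 ≤ d) (hdk : d ≤ k)
    (hk : k ≤ n * (d - 1)) (hqr : k = q * (d - 1) + r) (hr : r < d - 1) :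
    divCount d (mExp n d q r)
      = Nat.choose (q + d) d - Nat.choose (q + d - r - 1) q - q := by
  classical
  obtain ⟨e, rfl⟩ : ∃ e, d = e + 1 := ⟨d - 1, by omega⟩
  have he : 1 ≤ e := by omega
  simp only [Nat.add_sub_cancel] at hk hqr hr
  have hre : r < e := hr
  have hq1 : 1 ≤ q := by
    rcases Nat.eq_zero_or_pos q with h | h
    · exfalso; subst h; omega
    · exact h
  have hqn : q ≤ n := by
    have h1 : q * e ≤ n * e := by omega
    exact Nat.le_of_mul_le_mul_right h1 (by omega)
  obtain ⟨v, hv⟩ : ∃ v : Fin n → ℕ, v = mExp n (e+1) q r := ⟨_, rfl⟩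
  have hvlt : ∀ i : Fin n, (i:ℕ) < q → v i = e := by
    intro i hi; simp [hv, mExp, if_pos hi]
  have hveq : ∀ i : Fin n, (i:ℕ) = q → v i = r := by
    intro i hi; simp [hv, mExp, hi]
  have hvgt : ∀ i : Fin n, q < (i:ℕ) → v i = 0 := by
    intro i hi; simp only [hv, mExp]; rw [if_neg (by omega), if_neg (by omega)]
  obtain ⟨w, hwlt, hwgt⟩ : ∃ w : Fin n → ℕ,
      (∀ i : Fin n, (i:ℕ) < q + 1 → w i = e + 1) ∧
      (∀ i : Fin n, q + 1 ≤ (i:ℕ) → w i = 0) := by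
    refine ⟨fun i => if (i : ℕ) < q + 1 then e + 1 else 0, fun i hi => ?_, fun i hi => ?_⟩
    · simp only [if_pos hi]
    · simp only; rw [if_neg (by omega)]
  have hvw : v ≤ w := by
    intro i
    show v i ≤ w i
    rcases lt_trichotomy (i:ℕ) q with h | h | h
    · rw [hvlt i h, hwlt i (by omega)]; omega
    · rw [hveq i h, hwlt i (by omega)]; omega
    · rw [hvgt i h]; exact Nat.zero_le _
  obtain ⟨U, hU⟩ : ∃ U : Finset (Fin n → ℕ),
      U = (Finset.Iic w).filter fun a => ∑ i, a i = e + 1 := ⟨_, rfl⟩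
  have hUmem : ∀ a, a ∈ U ↔ (∀ i, a i ≤ w i) ∧ ∑ i, a i = e + 1 := by
    intro a
    simp [hU, Finset.mem_filter, Finset.mem_Iic, Pi.le_def]
  have hUd : ∀ a ∈ U, ∀ i, a i ≤ e + 1 := by
    intro a ha i
    rw [hUmem] at ha
    rw [← ha.2]
    exact Finset.single_le_sum (fun _ _ => Nat.zero_le _) (Finset.mem_univ i)
  have hSsub : ((Finset.Iic v).filter fun a => ∑ i, a i = e + 1)
      = U.filter (fun a => a ≤ v) := by
    ext a
    simp only [Finset.mem_filter, Finset.mem_Iic, hUmem, Pi.le_def]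
    constructor
    · rintro ⟨h1, h2⟩
      exact ⟨⟨fun i => le_trans (h1 i) (hvw i), h2⟩, h1⟩
    · rintro ⟨⟨-, h2⟩, h3⟩
      exact ⟨h3, h2⟩
  obtain ⟨A, hA⟩ : ∃ A : Finset (Fin n → ℕ),
      A = (Finset.univ.filter fun i : Fin n => (i:ℕ) < q).image
        (fun i => Function.update (0 : Fin n → ℕ) i (e+1)) := ⟨_, rfl⟩
  have hfq : (Finset.univ.filter fun i : Fin n => (i:ℕ) < q).card = q := by
    have hbij : (Finset.univ.filter fun i : Fin n => (i:ℕ) < q).card = (Finset.range q).card := by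
      refine Finset.card_bij' (fun i _ => (i : ℕ))
        (fun j hj => (⟨j, by rw [Finset.mem_range] at hj; omega⟩ : Fin n)) ?_ ?_ ?_ ?_
      · intro i hi
        simp only [Finset.mem_filter] at hi
        simpa using hi.2
      · intro j hj
        simp [Finset.mem_range.mp hj]
      · intro i _; simp
      · intro j _; simp
    rw [hbij, Finset.card_range]
  have hcardA : A.card = q := by
    rw [hA, Finset.card_image_of_injOn, hfq]
    intro i _ i' _ hii
    have hcf := congrFun hii i
    simp only [Function.update_self] at hcf
    by_contra hne
    rw [Function.update_of_ne hne] at hcf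
    simp at hcf
  have hAsub : ∀ a ∈ A, a ∈ U ∧ ¬ a ≤ v := by
    intro a ha
    rw [hA, Finset.mem_image] at ha
    obtain ⟨i, hi, rfl⟩ := ha
    rw [Finset.mem_filter] at hi
    have hiq : (i : ℕ) < q := hi.2
    constructor
    · rw [hUmem]
      constructor
      · intro j
        by_cases hji : j = i
        · rw [hji, Function.update_self, hwlt i (by omega)]
        · rw [Function.update_of_ne hji]; simp
      · rw [sum_update_eq]; simp
    · rw [Pi.le_def]; push_neg
      refine ⟨i, ?_⟩
      rw [Function.update_self, hvlt i hiq]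
      omega
  have hbad : ∀ a, a ∈ U → ¬ a ≤ v → a ∈ A ∨ ∃ hq' : q < n, r < a ⟨q, hq'⟩ := by
    intro a haU hav
    rw [Pi.le_def] at hav; push_neg at hav
    obtain ⟨i, hvi⟩ := hav
    have haw := (hUmem a).mp haU
    rcases lt_trichotomy (i:ℕ) q with hlt | heq | hgt
    · left
      rw [hvlt i hlt] at hvi
      have h1 : a i ≤ e + 1 := hUd a haU i
      have h2 : a i = e + 1 := by omega
      have hs := sum_erase_eq a i
      have hz0 : ∑ x ∈ Finset.univ.erase i, a x = 0 := by
        have hsum := haw.2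
        omega
      have hz : ∀ j, j ≠ i → a j = 0 := by
        intro j hj
        exact Finset.sum_eq_zero_iff.mp hz0 j (Finset.mem_erase.mpr ⟨hj, Finset.mem_univ j⟩)
      rw [hA, Finset.mem_image]
      refine ⟨i, Finset.mem_filter.mpr ⟨Finset.mem_univ i, hlt⟩, ?_⟩
      funext j
      by_cases hji : j = i
      · rw [hji, Function.update_self, h2]
      · rw [Function.update_of_ne hji, (hz j hji)]; rfl
    · right
      have hq' : q < n := heq ▸ i.isLt
      refine ⟨hq', ?_⟩
      have hip : (⟨q, hq'⟩ : Fin n) = i := Fin.ext (by simp [heq])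
      rw [hip]
      rw [hveq i heq] at hvi
      exact hvi
    · exfalso
      have hwi : a i ≤ 0 := by
        have h := haw.1 i
        rwa [hwgt i (by omega)] at h
      rw [hvgt i hgt] at hvi
      omega
  have hsplitcard := Finset.card_filter_add_card_filter_not
    (s := U) (p := fun a => a ≤ v)
  rcases Nat.lt_or_ge q n with hqlt | hqge
  · -- case q < n
    obtain ⟨p, hpq⟩ : ∃ p : Fin n, (p : ℕ) = q := ⟨⟨q, hqlt⟩, rfl⟩
    obtain ⟨B, hB⟩ : ∃ B : Finset (Fin n → ℕ), B = U.filter fun a => r < a p := ⟨_, rfl⟩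
    have hvp : v p = r := hveq p hpq
    have hbadset : U.filter (fun a => ¬ a ≤ v) = A ∪ B := by
      ext a
      simp only [Finset.mem_filter, Finset.mem_union]
      constructor
      · rintro ⟨haU, hav⟩
        rcases hbad a haU hav with h | ⟨hq', h⟩
        · left; exact h
        · right
          rw [hB, Finset.mem_filter]
          refine ⟨haU, ?_⟩
          have hh : (⟨q, hq'⟩ : Fin n) = p := Fin.ext (by simp [hpq])
          rwa [hh] at h
      · intro h
        rcases h with h | h
        · exact hAsub a h
        · rw [hB, Finset.mem_filter] at h
          obtain ⟨h1, h2⟩ := h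
          refine ⟨h1, ?_⟩
          intro hle
          have h3 : a p ≤ v p := hle p
          clear * - h3 hvp h2
          omega
    have hdisj : Disjoint A B := by
      rw [Finset.disjoint_left]
      intro a haA haB
      rw [hA, Finset.mem_image] at haA
      obtain ⟨i, hi, rfl⟩ := haA
      rw [Finset.mem_filter] at hi
      rw [hB, Finset.mem_filter] at haB
      obtain ⟨-, haB2⟩ := haB
      have hip : p ≠ i := by
        intro h
        have h2 := congrArg Fin.val h
        have h3 := hi.2
        omega
      rw [Function.update_of_ne hip] at haB2
      simp at haB2
    have hcardU : U.card = ((e+1) + (q+1) - 1).choose (e+1) := by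
      rw [hU]
      apply SB (q+1) (e+1) w (by omega)
      · intro i hi
        rw [hwlt i hi]
      · intro i hi
        exact hwgt i hi
    obtain ⟨c', hclt, hcgt⟩ : ∃ c' : Fin n → ℕ,
        (∀ i : Fin n, (i:ℕ) < q + 1 → c' i = e - r) ∧
        (∀ i : Fin n, q + 1 ≤ (i:ℕ) → c' i = 0) := by
      refine ⟨fun i => if (i : ℕ) < q + 1 then e - r else 0, fun i hi => ?_, fun i hi => ?_⟩
      · simp only [if_pos hi]
      · simp only; rw [if_neg (by omega)]
    have hcardT : ((Finset.Iic c').filter fun a => ∑ i, a i = e - r).card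
        = ((e - r) + (q+1) - 1).choose (e - r) := by
      apply SB (q+1) (e - r) c' (by omega)
      · intro i hi
        rw [hclt i hi]
      · intro i hi
        exact hcgt i hi
    have hcardB : B.card = ((e - r) + (q+1) - 1).choose (e - r) := by
      rw [← hcardT]
      clear hcardT
      refine Finset.card_bij' (fun a _ => Function.update a p (a p - (r+1)))
        (fun b _ => Function.update b p (b p + (r+1))) ?_ ?_ ?_ ?_
      · intro a ha
        rw [hB, Finset.mem_filter] at ha
        obtain ⟨haU, hra⟩ := ha
        have hpd : a p ≤ e + 1 := hUd a haU p
        rw [hUmem] at haU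
        obtain ⟨hle, hsum⟩ := haU
        have hsplit := sum_erase_eq a p
        rw [Finset.mem_filter, Finset.mem_Iic, Pi.le_def]
        constructor
        · intro i
          by_cases hip : i = p
          · rw [hip, Function.update_self, hclt p (by omega)]
            clear * - hpd hra
            omega
          · rw [Function.update_of_ne hip]
            by_cases hiq : (i:ℕ) < q + 1
            · rw [hclt i hiq]
              have h1 : a i ≤ ∑ x ∈ Finset.univ.erase p, a x :=
                Finset.single_le_sum (fun _ _ => Nat.zero_le _)
                  (Finset.mem_erase.mpr ⟨hip, Finset.mem_univ i⟩)
              clear * - h1 hsplit hsum hra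
              omega
            · rw [hcgt i (by omega)]
              have h2 : a i ≤ w i := hle i
              rwa [hwgt i (by omega)] at h2
        · rw [sum_update_eq]
          clear * - hsplit hsum hra
          omega
      · intro b hb
        rw [Finset.mem_filter, Finset.mem_Iic, Pi.le_def] at hb
        obtain ⟨hle0, hsum⟩ := hb
        have hle : ∀ i, b i ≤ c' i := fun i => hle0 i
        clear hle0
        have hsplit := sum_erase_eq b p
        have hbp : b p ≤ e - r := by
          have h : b p ≤ c' p := hle p
          rwa [hclt p (by omega)] at h
        rw [hB, Finset.mem_filter, hUmem]
        refine ⟨⟨fun i => ?_, ?_⟩, ?_⟩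
        · by_cases hip : i = p
          · rw [hip, Function.update_self, hwlt p (by omega)]
            clear * - hbp hre
            omega
          · rw [Function.update_of_ne hip]
            by_cases hiq : (i:ℕ) < q + 1
            · rw [hwlt i hiq]
              have h : b i ≤ c' i := hle i
              rw [hclt i hiq] at h
              clear * - h hre
              omega
            · rw [hwgt i (by omega)]
              have h : b i ≤ c' i := hle i
              rwa [hcgt i (by omega)] at h
        · rw [sum_update_eq]
          clear * - hsplit hsum hre
          omega
        · rw [Function.update_self]
          clear * - hre
          omega
      · intro a ha
        rw [hB, Finset.mem_filter] at ha
        obtain ⟨-, hra⟩ := ha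
        funext i
        by_cases hip : i = p
        · rw [hip]
          simp only [Function.update_self]
          clear * - hra
          omega
        · simp only [Function.update_of_ne hip]
      · intro b hb
        funext i
        by_cases hip : i = p
        · rw [hip]
          simp only [Function.update_self]
          clear * -
          omega
        · simp only [Function.update_of_ne hip]
    -- assemble
    clear hcardT
    rw [hbadset, Finset.card_union_of_disjoint hdisj, hcardA, hcardB, hcardU] at hsplitcard
    have hgoal : divCount (e+1) (mExp n (e+1) q r) = (U.filter (fun a => a ≤ v)).card := by
      rw [divCount, ← hv, hSsub]
    rw [hgoal]
    have hc1 : ((e+1) + (q+1) - 1).choose (e+1) = (q + (e+1)).choose (e+1) := by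
      congr 1; omega
    have hc2 : ((e - r) + (q+1) - 1).choose (e - r) = (q + (e+1) - r - 1).choose q := by
      have h1 : (e - r) + (q+1) - 1 = (e - r) + q := by omega
      have h2 : q + (e+1) - r - 1 = (e - r) + q := by omega
      rw [h1, h2, ← Nat.choose_symm (by omega : q ≤ (e - r) + q)]
      congr 1; omega
    rw [hc1, hc2] at hsplitcard
    omega
  · -- case q = n
    have hqe : q = n := le_antisymm hqn hqge
    subst hqe
    have hr0 : r = 0 := by omega
    subst hr0
    have hbadset : U.filter (fun a => ¬ a ≤ v) = A := by
      ext a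
      simp only [Finset.mem_filter]
      constructor
      · rintro ⟨haU, hav⟩
        rcases hbad a haU hav with h | ⟨hq', -⟩
        · exact h
        · exact absurd hq' (lt_irrefl q)
      · intro h
        exact hAsub a h
    have hcardU : U.card = ((e+1) + q - 1).choose (e+1) := by
      rw [hU]
      apply SB q (e+1) w (le_refl q)
      · intro i hi
        rw [hwlt i (by omega)]
      · intro i hi
        exact absurd i.isLt (by omega)
    rw [hbadset, hcardA, hcardU] at hsplitcard
    have hgoal : divCount (e+1) (mExp q (e+1) q 0) = (U.filter (fun a => a ≤ v)).card := by
      rw [divCount, ← hv, hSsub]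
    rw [hgoal]
    have e1 : (q + (e+1)).choose (e+1) = (q+e).choose e + (q+e).choose (e+1) := by
      have h : q + (e+1) = (q+e)+1 := by omega
      rw [h, Nat.choose_succ_succ]
    have e2 : (q + (e+1) - 0 - 1).choose q = (q+e).choose e := by
      have h : q + (e+1) - 0 - 1 = q + e := by omega
      rw [h, ← Nat.choose_symm (by omega : q ≤ q + e)]
      congr 1; omega
    have e3 : ((e+1) + q - 1).choose (e+1) = (q+e).choose (e+1) := by
      congr 1; omega
    rw [e1, e2]
    rw [e3] at hsplitcard
    omega
end

section
/- Fix n ≥ 1, d ≥ 2, d ≤ k ≤ n(d−1), and set N = N(n,d,k) = binom(n+d−1, d) − C(n,d,k) + 1, where C(n,d,k) is the number of degree-d monomial divisors of m(n,d,k). Let J be the ideal generated by x₁^d,…,x_n^d together with any N − n further distinct monomials of degree d. Then J contains every monomial of degree k, i.e., J_k = K[x₁,…,x_n]_k. -/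
open MvPolynomial

/-- `C(n,d,k)`, the number of degree-`d` monomial divisors of `m(n,d,k)`. -/
def Cndk (n d q r : ℕ) : ℕ := divCount d (mExp n d q r)

/-- `N(n,d,k) = binom(n+d-1, d) − C(n,d,k) + 1`. -/
def Nndk (n d q r : ℕ) : ℕ := Nat.choose (n + d - 1) d - Cndk n d q r + 1

set_option maxHeartbeats 1000000

section Aux
open Finset

variable {n : ℕ}

lemma sum_g_update (s : Finset (Fin n)) (g : Fin n → ℕ → ℕ) (f : Fin n → ℕ)
    {j : Fin n} (hj : j ∈ s) (y : ℕ) :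
    ∑ l ∈ s, g l (Function.update f j y l) = g j y + ∑ l ∈ s.erase j, g l (f l) := by
  rw [← Finset.add_sum_erase s _ hj, Function.update_self]
  congr 1
  exact Finset.sum_congr rfl fun l hl => by
    rw [Function.update_of_ne (Finset.ne_of_mem_erase hl)]

lemma sum_g_plain (s : Finset (Fin n)) (g : Fin n → ℕ → ℕ) (f : Fin n → ℕ)
    {j : Fin n} (hj : j ∈ s) :
    ∑ l ∈ s, g l (f l) = g j (f j) + ∑ l ∈ s.erase j, g l (f l) :=
  (Finset.add_sum_erase s _ hj).symm

lemma divCount_comp_equiv (d : ℕ) (v : Fin n → ℕ) (σ : Equiv.Perm (Fin n)) :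
    divCount d (v ∘ σ) = divCount d v := by
  unfold divCount
  apply Finset.card_bij (fun a _ => a ∘ σ.symm)
  · intro a ha
    simp only [Finset.mem_filter, Finset.mem_Iic] at ha ⊢
    refine ⟨fun i => ?_, ?_⟩
    · have := ha.1 (σ.symm i)
      simpa using this
    · rw [← ha.2]
      exact Equiv.sum_comp σ.symm a
  · intro a _ b _ h
    funext i
    have := congrFun h (σ i)
    simpa using this
  · intro b hb
    refine ⟨b ∘ σ, ?_, ?_⟩
    · simp only [Finset.mem_filter, Finset.mem_Iic] at hb ⊢
      exact ⟨fun i => hb.1 (σ i), by rw [← hb.2]; exact Equiv.sum_comp σ b⟩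
    · funext i; simp

lemma divCount_exchange (d : ℕ) (v : Fin n → ℕ) {i j : Fin n} (hij : i ≠ j)
    (hj1 : 1 ≤ v j) (hji : v j ≤ v i) :
    divCount d (Function.update (Function.update v i (v i + 1)) j (v j - 1)) ≤ divCount d v := by
  classical
  set v' := Function.update (Function.update v i (v i + 1)) j (v j - 1) with hv'
  have hv'i : v' i = v i + 1 := by
    rw [hv', Function.update_of_ne hij, Function.update_self]
  have hv'j : v' j = v j - 1 := by rw [hv', Function.update_self]
  have hv'l : ∀ l, l ≠ i → l ≠ j → v' l = v l := by
    intro l hli hlj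
    rw [hv', Function.update_of_ne hlj, Function.update_of_ne hli]
  set D := fun w : Fin n → ℕ => (Finset.Iic w).filter fun a => ∑ t, a t = d with hD
  have hmem : ∀ w a, a ∈ D w ↔ (∀ l, a l ≤ w l) ∧ ∑ t, a t = d := by
    intro w a
    simp [hD, Finset.mem_Iic, Pi.le_def]
  -- characterization of elements in D v' \ D v
  have hchar : ∀ a ∈ (D v') \ (D v), (∀ l, a l ≤ v' l) ∧ (∑ t, a t = d) ∧ a i = v i + 1 := by
    intro a ha
    rw [Finset.mem_sdiff, hmem, hmem] at ha
    obtain ⟨⟨hle, hsum⟩, hnot⟩ := ha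
    refine ⟨hle, hsum, ?_⟩
    by_contra hne
    apply hnot
    refine ⟨fun l => ?_, hsum⟩
    have h1 := hle l
    rcases eq_or_ne l i with h | h
    · subst h; rw [hv'i] at h1; omega
    rcases eq_or_ne l j with h2 | h2
    · subst h2; rw [hv'j] at h1; omega
    · rwa [hv'l l h h2] at h1
  have hinj : ((D v') \ (D v)).card ≤ ((D v) \ (D v')).card := by
    apply Finset.card_le_card_of_injOn
      (fun a => Function.update (Function.update a j (v j)) i (a i - (v j - a j)))
    · intro a ha
      obtain ⟨hle, hsum, hai⟩ := hchar a ha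
      have haj : a j ≤ v j - 1 := by have := hle j; rwa [hv'j] at this
      set b := Function.update (Function.update a j (v j)) i (a i - (v j - a j)) with hb
      have hbi : b i = a i - (v j - a j) := by rw [hb, Function.update_self]
      have hbj : b j = v j := by
        rw [hb, Function.update_of_ne (Ne.symm hij), Function.update_self]
      have hbl : ∀ l, l ≠ i → l ≠ j → b l = a l := by
        intro l hli hlj
        rw [hb, Function.update_of_ne hli, Function.update_of_ne hlj]
      show b ∈ ((D v \ D v' : Finset _) : Set _)
      rw [Finset.mem_coe, Finset.mem_sdiff]
      constructor
      · rw [hmem]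
        constructor
        · intro l
          rcases eq_or_ne l i with h | h
          · subst h; rw [hbi]; omega
          rcases eq_or_ne l j with h2 | h2
          · subst h2; rw [hbj]
          · rw [hbl l h h2]
            have := hle l; rwa [hv'l l h h2] at this
        · rw [hb]
          rw [sum_g_update Finset.univ (fun _ x => x) _ (Finset.mem_univ i)]
          rw [sum_g_update (Finset.univ.erase i) (fun _ x => x) _
              (Finset.mem_erase.mpr ⟨Ne.symm hij, Finset.mem_univ j⟩)]
          rw [sum_g_plain Finset.univ (fun _ x => x) a (Finset.mem_univ i)] at hsum
          rw [sum_g_plain (Finset.univ.erase i) (fun _ x => x) a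
              (Finset.mem_erase.mpr ⟨Ne.symm hij, Finset.mem_univ j⟩)] at hsum
          omega
      · rw [hmem]
        rintro ⟨hble, -⟩
        have := hble j
        rw [hbj, hv'j] at this
        omega
    · intro a ha a' ha' heq
      rw [Finset.mem_coe] at ha ha'
      obtain ⟨hle, hsum, hai⟩ := hchar a ha
      obtain ⟨hle', hsum', hai'⟩ := hchar a' ha'
      have haj : a j ≤ v j - 1 := by have := hle j; rwa [hv'j] at this
      have haj' : a' j ≤ v j - 1 := by have := hle' j; rwa [hv'j] at this
      funext l
      rcases eq_or_ne l i with h | h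
      · subst h; rw [hai, hai']
      rcases eq_or_ne l j with h2 | h2
      · subst h2
        have := congrFun heq i
        simp only [Function.update_self] at this
        rw [hai] at this
        conv at this => rw [hai']
        omega
      · have := congrFun heq l
        simp only [Function.update_of_ne h, Function.update_of_ne h2] at this
        exact this
  have h1 := Finset.card_inter_add_card_sdiff (D v') (D v)
  have h2 := Finset.card_inter_add_card_sdiff (D v) (D v')
  rw [Finset.inter_comm] at h2
  show (D v').card ≤ (D v).card
  omega

lemma sum_mExp (n d q r : ℕ) (hq : q ≤ n) (hqn : q = n → r = 0) :
    ∑ i, mExp n d q r i = q * (d - 1) + r := by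
  have h0 : ∑ i : Fin n, mExp n d q r i
      = ∑ j ∈ Finset.range n, (if j < q then d - 1 else if j = q then r else 0 : ℕ) := by
    simp only [mExp]
    exact Fin.sum_univ_eq_sum_range (fun j => if j < q then d - 1 else if j = q then r else 0) n
  rw [h0, Finset.range_eq_Ico, ← Finset.sum_Ico_consecutive _ (Nat.zero_le q) hq]
  have h1 : ∑ j ∈ Finset.Ico 0 q, (if j < q then d - 1 else if j = q then r else 0 : ℕ)
      = q * (d - 1) := by
    rw [Finset.sum_congr rfl (fun j hj => if_pos (Finset.mem_Ico.mp hj).2)]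
    rw [Finset.sum_const, Nat.card_Ico, smul_eq_mul, Nat.sub_zero]
  have h2 : ∑ j ∈ Finset.Ico q n, (if j < q then d - 1 else if j = q then r else 0 : ℕ)
      = if q < n then r else 0 := by
    rw [Finset.sum_congr rfl (fun j hj => if_neg (by
      have := (Finset.mem_Ico.mp hj).1; omega))]
    rw [Finset.sum_ite_eq' (Finset.Ico q n) q (fun _ => r)]
    simp [Finset.mem_Ico]
  rw [h1, h2]
  rcases lt_or_eq_of_le hq with h | h
  · rw [if_pos h]
  · rw [if_neg (by omega), hqn h]

lemma terminal_eq_mExp {n d q r : ℕ} (hd : 2 ≤ d) (hr : r < d - 1)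
    (v : Fin n → ℕ) (hbd : ∀ i, v i ≤ d - 1)
    (hsum : ∑ i, v i = q * (d - 1) + r)
    (hanti : ∀ i j : Fin n, i ≤ j → v j ≤ v i)
    (hterm : ¬ ∃ i j : Fin n, i ≠ j ∧ 1 ≤ v j ∧ v j ≤ v i ∧ v i ≤ d - 2) :
    v = mExp n d q r := by
  classical
  push_neg at hterm
  set s := Finset.univ.filter (fun i => v i = d - 1) with hs
  set q' := s.card with hq'
  have hdc : ∀ i j : Fin n, i ≤ j → j ∈ s → i ∈ s := by
    intro i j hij hj
    rw [hs, Finset.mem_filter] at hj ⊢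
    have h1 := hanti i j hij
    have h2 := hbd i
    exact ⟨Finset.mem_univ i, by omega⟩
  have hseg : ∀ i : Fin n, v i = d - 1 ↔ (i : ℕ) < q' := by
    intro i
    constructor
    · intro h
      have hsub : Finset.Iic i ⊆ s := fun j hj =>
        hdc j i (Finset.mem_Iic.mp hj) (Finset.mem_filter.mpr ⟨Finset.mem_univ i, h⟩)
      have := Finset.card_le_card hsub
      rw [Fin.card_Iic] at this
      omega
    · intro h
      by_contra hne
      have hsub : s ⊆ Finset.Iio i := by
        intro j hj
        rw [Finset.mem_Iio]
        by_contra hji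
        push_neg at hji
        exact hne (Finset.mem_filter.mp (hdc i j hji hj)).2
      have := Finset.card_le_card hsub
      rw [Fin.card_Iio] at this
      omega
  have hq'n : q' ≤ n := by
    have := Finset.card_le_univ s
    rwa [Fintype.card_fin] at this
  have huniq : ∀ q'' r'', q'' * (d-1) + r'' = q * (d-1) + r → r'' < d - 1 → q'' = q ∧ r'' = r := by
    intro q'' r'' he hre
    have hmod : ∀ a b : ℕ, b < d - 1 → (a * (d-1) + b) % (d-1) = b := by
      intro a b hb
      rw [mul_comm, Nat.mul_add_mod, Nat.mod_eq_of_lt hb]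
    have h1 : r'' = r := by
      have e1 := hmod q'' r'' hre
      have e2 := hmod q r hr
      rw [he, e2] at e1
      exact e1.symm
    refine ⟨?_, h1⟩
    have h2 : q'' * (d-1) = q * (d-1) := by omega
    exact Nat.eq_of_mul_eq_mul_right (by omega) h2
  by_cases hlt : q' < n
  · set i0 : Fin n := ⟨q', hlt⟩ with hi0
    set r' := v i0 with hr'
    have hr'ne : v i0 ≠ d - 1 := by
      intro h
      have := (hseg i0).mp h
      simp [hi0] at this
    have hr'le : r' ≤ d - 2 := by
      have := hbd i0
      omega
    have hzero : ∀ j : Fin n, q' < (j : ℕ) → v j = 0 := by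
      intro j hj
      by_contra hne
      have h1 : 1 ≤ v j := Nat.one_le_iff_ne_zero.mpr hne
      have hij : i0 ≤ j := by
        rw [Fin.le_def]
        simp [hi0]
        omega
      have h2 : v j ≤ v i0 := hanti i0 j hij
      have hne' : i0 ≠ j := by
        intro h
        rw [← h] at hj
        simp [hi0] at hj
      have := hterm i0 j hne' h1 h2
      omega
    have hv : v = mExp n d q' r' := by
      funext i
      show v i = if (i : ℕ) < q' then d - 1 else if (i : ℕ) = q' then r' else 0
      rcases lt_trichotomy (i : ℕ) q' with h | h | h
      · rw [if_pos h]
        exact (hseg i).mpr h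
      · rw [if_neg (by omega), if_pos h]
        have : i = i0 := Fin.ext (by simp [hi0, h])
        rw [this]
      · rw [if_neg (by omega), if_neg (by omega)]
        exact hzero i h
    have hs2 : q' * (d-1) + r' = q * (d-1) + r := by
      rw [← sum_mExp n d q' r' (le_of_lt hlt) (by omega), ← hv, hsum]
    obtain ⟨e1, e2⟩ := huniq q' r' hs2 (by omega)
    rw [hv, e1, e2]
  · have hq'e : q' = n := by omega
    have hv : v = mExp n d q' 0 := by
      funext i
      show v i = if (i : ℕ) < q' then d - 1 else if (i : ℕ) = q' then 0 else 0
      rw [if_pos (by omega)]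
      exact (hseg i).mpr (by omega)
    have hs2 : q' * (d-1) + 0 = q * (d-1) + r := by
      rw [← sum_mExp n d q' 0 hq'n (fun _ => rfl), ← hv, hsum]
    obtain ⟨e1, e2⟩ := huniq q' 0 hs2 (by omega)
    rw [hv, e1, e2]

lemma measure_step {M B A1 A2 W1 W2 : ℕ} (h12 : A1 < A2) (h2M : A2 ≤ M) (hW2 : W2 < B) :
    (M + 1 - A2) * B + W2 < (M + 1 - A1) * B + W1 := by
  have hstep : M + 1 - A2 + 1 ≤ M + 1 - A1 := by omega
  calc (M + 1 - A2) * B + W2 < (M + 1 - A2) * B + B := by omega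
    _ = (M + 1 - A2 + 1) * B := by ring
    _ ≤ (M + 1 - A1) * B := Nat.mul_le_mul_right B hstep
    _ ≤ (M + 1 - A1) * B + W1 := Nat.le_add_right _ _

lemma key_min {n d q r : ℕ} (hd : 2 ≤ d) (hr : r < d - 1) :
    ∀ m : ℕ, ∀ v : Fin n → ℕ,
      (n * (d-1)^2 + 1 - ∑ l, (v l)^2) * (n*n*d + 1) + ∑ l : Fin n, ((l:ℕ) + 1) * v l < m →
      (∀ i, v i ≤ d - 1) → (∑ i, v i = q * (d-1) + r) →
      Cndk n d q r ≤ divCount d v := by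
  intro m
  induction m with
  | zero => intro v h; exact absurd h (Nat.not_lt_zero _)
  | succ m ih =>
    intro v hmu hbd hsum
    by_cases hsort : ∃ i j : Fin n, i < j ∧ v i < v j
    · obtain ⟨i, j, hij, hvij⟩ := hsort
      have hne : i ≠ j := ne_of_lt hij
      set σ := Equiv.swap i j with hσ
      set v2 := v ∘ σ with hv2
      have hv2l : ∀ l, l ≠ i → l ≠ j → v2 l = v l := by
        intro l h1 h2
        simp [hv2, hσ, Equiv.swap_apply_of_ne_of_ne h1 h2]
      have hcnt : divCount d v2 = divCount d v := divCount_comp_equiv d v σ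
      have hsq : ∑ l, (v2 l)^2 = ∑ l, (v l)^2 := Equiv.sum_comp σ (fun l => (v l)^2)
      have hsumeq : ∑ l, v2 l = ∑ l, v l := Equiv.sum_comp σ v
      have hjmem : j ∈ Finset.univ.erase i :=
        Finset.mem_erase.mpr ⟨Ne.symm hne, Finset.mem_univ j⟩
      have hW : ∑ l : Fin n, ((l:ℕ)+1) * v2 l < ∑ l : Fin n, ((l:ℕ)+1) * v l := by
        rw [sum_g_plain Finset.univ (fun l x => ((l:ℕ)+1)*x) v2 (Finset.mem_univ i),
            sum_g_plain (Finset.univ.erase i) (fun l x => ((l:ℕ)+1)*x) v2 hjmem,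
            sum_g_plain Finset.univ (fun l x => ((l:ℕ)+1)*x) v (Finset.mem_univ i),
            sum_g_plain (Finset.univ.erase i) (fun l x => ((l:ℕ)+1)*x) v hjmem]
        have hrest : ∑ l ∈ (Finset.univ.erase i).erase j, ((l:ℕ)+1) * v2 l
            = ∑ l ∈ (Finset.univ.erase i).erase j, ((l:ℕ)+1) * v l := by
          apply Finset.sum_congr rfl
          intro l hl
          rw [hv2l l (Finset.ne_of_mem_erase (Finset.mem_of_mem_erase hl))
            (Finset.ne_of_mem_erase hl)]
        rw [hrest]
        have e1 : v2 i = v j := by simp [hv2, hσ, Equiv.swap_apply_left]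
        have e2 : v2 j = v i := by simp [hv2, hσ, Equiv.swap_apply_right]
        simp only [e1, e2]
        have hij' : (i:ℕ) < (j:ℕ) := hij
        obtain ⟨c, hc⟩ : ∃ c, v j = v i + c + 1 := ⟨v j - v i - 1, by omega⟩
        rw [hc]
        have hb : (i:ℕ) + 1 < (j:ℕ) + 1 := by omega
        nlinarith [Nat.mul_le_mul_right (c+1) (Nat.succ_le_of_lt hij')]
      rw [← hcnt]
      apply ih v2 _ (fun l => hbd (σ l)) (by rw [hsumeq, hsum])
      rw [hsq]
      have := Nat.add_lt_add_left hW ((n * (d-1)^2 + 1 - ∑ l, (v l)^2) * (n*n*d + 1))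
      omega
    · push_neg at hsort
      by_cases hexc : ∃ i j : Fin n, i ≠ j ∧ 1 ≤ v j ∧ v j ≤ v i ∧ v i ≤ d - 2
      · obtain ⟨i, j, hij, h1, h2, h3⟩ := hexc
        obtain ⟨v2, hv2⟩ : ∃ w, w = Function.update (Function.update v i (v i + 1)) j (v j - 1) :=
          ⟨_, rfl⟩
        have hv2i : v2 i = v i + 1 := by
          rw [hv2, Function.update_of_ne hij, Function.update_self]
        have hv2j : v2 j = v j - 1 := by rw [hv2, Function.update_self]
        have hv2l : ∀ l, l ≠ i → l ≠ j → v2 l = v l := by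
          intro l hli hlj
          rw [hv2, Function.update_of_ne hlj, Function.update_of_ne hli]
        have hcnt := divCount_exchange d v hij h1 h2
        rw [← hv2] at hcnt
        have hbd2 : ∀ l, v2 l ≤ d - 1 := by
          intro l
          rcases eq_or_ne l i with h | h
          · subst h; rw [hv2i]; omega
          rcases eq_or_ne l j with h' | h'
          · subst h'; rw [hv2j]; have := hbd l; omega
          · rw [hv2l l h h']; exact hbd l
        have hjmem : j ∈ Finset.univ.erase i :=
          Finset.mem_erase.mpr ⟨Ne.symm hij, Finset.mem_univ j⟩
        have hdecomp : ∀ g : Fin n → ℕ → ℕ,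
            (∑ l, g l (v2 l) = g i (v2 i) + (g j (v2 j) +
              ∑ l ∈ (Finset.univ.erase i).erase j, g l (v l))) ∧
            (∑ l, g l (v l) = g i (v i) + (g j (v j) +
              ∑ l ∈ (Finset.univ.erase i).erase j, g l (v l))) := by
          intro g
          constructor
          · rw [sum_g_plain Finset.univ g v2 (Finset.mem_univ i),
                sum_g_plain (Finset.univ.erase i) g v2 hjmem]
            congr 1
            congr 1
            apply Finset.sum_congr rfl
            intro l hl
            rw [hv2l l (Finset.ne_of_mem_erase (Finset.mem_of_mem_erase hl))
              (Finset.ne_of_mem_erase hl)]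
          · rw [sum_g_plain Finset.univ g v (Finset.mem_univ i),
                sum_g_plain (Finset.univ.erase i) g v hjmem]
        have hsum2 : ∑ l, v2 l = q * (d-1) + r := by
          obtain ⟨ha, hb⟩ := hdecomp (fun _ x => x)
          rw [hv2i, hv2j] at ha
          have heq : ∑ l, v2 l = ∑ l, v l := by omega
          rw [heq, hsum]
        have hsq2 : ∑ l, (v l)^2 < ∑ l, (v2 l)^2 := by
          obtain ⟨ha, hb⟩ := hdecomp (fun _ x => x^2)
          rw [ha, hb, hv2i, hv2j]
          obtain ⟨c, hc⟩ : ∃ c, v j = c + 1 := ⟨v j - 1, by omega⟩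
          rw [hc]
          simp only [Nat.add_sub_cancel]
          have : c ≤ v i := by omega
          nlinarith
        -- measure bounds
        have hsqbd : ∑ l, (v2 l)^2 ≤ n * (d-1)^2 := by
          calc ∑ l, (v2 l)^2 ≤ ∑ _l : Fin n, (d-1)^2 :=
                Finset.sum_le_sum fun l _ => Nat.pow_le_pow_left (hbd2 l) 2
            _ = n * (d-1)^2 := by
                rw [Finset.sum_const, Finset.card_univ, Fintype.card_fin, smul_eq_mul]
        have hWbd : ∑ l : Fin n, ((l:ℕ)+1) * v2 l < n*n*d + 1 := by
          have : ∑ l : Fin n, ((l:ℕ)+1) * v2 l ≤ ∑ _l : Fin n, n * (d-1) := by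
            apply Finset.sum_le_sum
            intro l _
            exact Nat.mul_le_mul (by have := l.isLt; omega) (hbd2 l)
          rw [Finset.sum_const, Finset.card_univ, Fintype.card_fin, smul_eq_mul] at this
          have h2 : n * (n * (d-1)) ≤ n * (n * d) := by
            apply Nat.mul_le_mul_left
            apply Nat.mul_le_mul_left
            omega
          calc ∑ l : Fin n, ((l:ℕ)+1) * v2 l ≤ n * (n * (d-1)) := this
            _ ≤ n * (n * d) := h2
            _ < n * n * d + 1 := by rw [Nat.mul_assoc]; omega
        refine le_trans (ih v2 ?_ hbd2 hsum2) hcnt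
        exact lt_of_lt_of_le (measure_step hsq2 hsqbd hWbd) (Nat.lt_succ_iff.mp hmu)
      · have hanti : ∀ i j : Fin n, i ≤ j → v j ≤ v i := by
          intro i j h
          rcases lt_or_eq_of_le h with h' | h'
          · exact hsort i j h'
          · rw [h']
        rw [terminal_eq_mExp hd hr v hbd hsum hanti hexc]
        exact le_refl _

end Aux

noncomputable def toSymAux (n d : ℕ) (i0 : Fin n) (w : Fin n →₀ ℕ) : Sym (Fin n) d :=
  if h : Multiset.card (Finsupp.toMultiset w) = d then ⟨Finsupp.toMultiset w, h⟩
  else Sym.replicate d i0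

/-- Fix `n ≥ 1`, `d ≥ 2`, `d ≤ k ≤ n(d-1)`, `k = q(d-1)+r`, `0 ≤ r < d-1`, and
`N = N(n,d,k)`. If `J` is the ideal generated by the monomials `x₁^d, …, x_n^d`
together with `N − n` further distinct monomials of degree `d` (i.e. by any `N` distinct
monomials of degree `d` including all the `x_i^d`), then `J` contains every monomial of
degree `k`, i.e. `J_k = K[x₁,…,x_n]_k`. -/
theorem stmt_6 (K : Type) [Field K] (n d k q r : ℕ) (hn : 1 ≤ n) (hd : 2 ≤ d)
    (hdk : d ≤ k) (hk : k ≤ n * (d - 1)) (hqr : k = q * (d - 1) + r) (hr : r < d - 1)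
    (S : Finset (Fin n →₀ ℕ)) (hSdeg : ∀ v ∈ S, ∑ i, v i = d)
    (hSpow : ∀ i : Fin n, Finsupp.single i d ∈ S)
    (hScard : S.card = Nndk n d q r) :
    ∀ v : Fin n →₀ ℕ, (∑ i, v i = k) →
      monomial v (1 : K) ∈ Ideal.span ((fun w => monomial w (1 : K)) '' (S : Set (Fin n →₀ ℕ))) := by
  classical
  intro v hv
  have hmain : ∃ w ∈ S, w ≤ v := by
    by_cases hbig : ∃ i, d ≤ v i
    · obtain ⟨i, hi⟩ := hbig
      refine ⟨Finsupp.single i d, hSpow i, ?_⟩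
      rw [Finsupp.le_def]
      intro j
      rcases eq_or_ne j i with rfl | h
      · simpa [Finsupp.single_apply] using hi
      · simp [Finsupp.single_apply, Ne.symm h]
    · push_neg at hbig
      have hbd : ∀ i, (v : Fin n → ℕ) i ≤ d - 1 := fun i => by
        have h1 := hbig i
        omega
      obtain ⟨DS, hDS⟩ : ∃ DS : Finset (Fin n →₀ ℕ),
          DS = ((Finset.Iic (⇑v)).filter fun a => ∑ t, a t = d).image
            Finsupp.equivFunOnFinite.symm := ⟨_, rfl⟩
      have hDScard : DS.card = divCount d ⇑v := by
        rw [hDS, Finset.card_image_of_injective _ (Equiv.injective _)]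
        rfl
      have hDSle : Cndk n d q r ≤ DS.card := by
        rw [hDScard]
        exact key_min hd hr _ ⇑v (Nat.lt_succ_self _) hbd (by rw [hv, hqr])
      have hDSmem : ∀ w ∈ DS, (∀ t, w t ≤ v t) ∧ ∑ t, w t = d := by
        intro w hw
        rw [hDS, Finset.mem_image] at hw
        obtain ⟨a, ha, haw⟩ := hw
        rw [Finset.mem_filter, Finset.mem_Iic] at ha
        have hwa : ⇑w = a := by rw [← haw]; rfl
        rw [hwa]
        exact ⟨fun t => ha.1 t, ha.2⟩
      by_contra hcon
      push_neg at hcon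
      have hdisj : Disjoint S DS := by
        rw [Finset.disjoint_left]
        intro w hwS hwDS
        exact hcon w hwS (Finsupp.le_def.mpr (hDSmem w hwDS).1)
      have hunion : ∀ w ∈ S ∪ DS, ∑ t, w t = d := by
        intro w hw
        rcases Finset.mem_union.mp hw with h | h
        · exact hSdeg w h
        · exact (hDSmem w h).2
      have hcardsum : ∀ w : Fin n →₀ ℕ, Multiset.card (Finsupp.toMultiset w) = ∑ t, w t := by
        intro w
        rw [Finsupp.card_toMultiset, Finsupp.sum_fintype _ _ (fun _ => rfl)]
        rfl
      have hinj : Function.Injective (Finsupp.toMultiset : (Fin n →₀ ℕ) → Multiset (Fin n)) := by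
        intro f g h
        have := congrArg Multiset.toFinsupp h
        rwa [Finsupp.toMultiset_toFinsupp, Finsupp.toMultiset_toFinsupp] at this
      have hcardle : (S ∪ DS).card ≤ (n + d - 1).choose d := by
        have i0 : Fin n := ⟨0, hn⟩
        have hle := Finset.card_le_card_of_injOn
          (f := toSymAux n d i0)
          (s := S ∪ DS) (t := Finset.univ)
          (fun w _ => Finset.mem_univ _)
          (by
            intro w1 h1 w2 h2 heq
            rw [Finset.mem_coe] at h1 h2
            have e1 : Multiset.card (Finsupp.toMultiset w1) = d := by
              rw [hcardsum w1]
              exact hunion w1 h1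
            have e2 : Multiset.card (Finsupp.toMultiset w2) = d := by
              rw [hcardsum w2]
              exact hunion w2 h2
            unfold toSymAux at heq
            have k : ∀ w (e : Multiset.card (Finsupp.toMultiset w) = d),
                (if h : Multiset.card (Finsupp.toMultiset w) = d then
                  (⟨Finsupp.toMultiset w, h⟩ : Sym (Fin n) d) else Sym.replicate d i0) = ⟨_, e⟩ :=
              fun w e => dif_pos e
            exact hinj (congrArg Sym.toMultiset ((k w1 e1).symm.trans (heq.trans (k w2 e2)))))
        calc (S ∪ DS).card ≤ (Finset.univ : Finset (Sym (Fin n) d)).card := hle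
          _ = Fintype.card (Sym (Fin n) d) := Finset.card_univ
          _ = (Fintype.card (Fin n) + d - 1).choose d := Sym.card_sym_eq_choose d
          _ = (n + d - 1).choose d := by rw [Fintype.card_fin]
      rw [Finset.card_union_of_disjoint hdisj] at hcardle
      rw [hScard] at hcardle
      unfold Nndk at hcardle
      omega
  obtain ⟨w, hwS, hwv⟩ := hmain
  have hsplit : monomial v (1 : K) = monomial (v - w) (1 : K) * monomial w 1 := by
    rw [monomial_mul, one_mul, tsub_add_cancel_of_le hwv]
  rw [hsplit]
  exact Ideal.mul_mem_left _ _ (Ideal.subset_span ⟨w, Finset.mem_coe.mpr hwS, rfl⟩)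
end

section
/- Fix n ≥ 1, d ≥ 2, and d ≤ k ≤ n(d−1), with N = N(n,d,k) as above. There exists a set of N − 1 distinct monomials of degree d in n variables, including x₁^d,…,x_n^d, such that the ideal J they generate satisfies J_k ⊊ K[x₁,…,x_n]_k. -/
open MvPolynomial

/-- Optimality of `N(n,d,k)`: there exists a set of `N − 1` distinct monomials of degree
`d` in `n` variables, including `x₁^d, …, x_n^d`, such that the ideal `J` they generate
satisfies `J_k ⊊ K[x₁,…,x_n]_k`, i.e. some monomial of degree `k` is not in `J`. -/
theorem stmt_7 (K : Type) [Field K] (n d k q r : ℕ) (hn : 1 ≤ n) (hd : 2 ≤ d)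
    (hdk : d ≤ k) (hk : k ≤ n * (d - 1)) (hqr : k = q * (d - 1) + r) (hr : r < d - 1) :
    ∃ S : Finset (Fin n →₀ ℕ),
      (∀ v ∈ S, ∑ i, v i = d) ∧
      (∀ i : Fin n, Finsupp.single i d ∈ S) ∧
      S.card = Nndk n d q r - 1 ∧
      ∃ v : Fin n →₀ ℕ, (∑ i, v i = k) ∧
        monomial v (1 : K) ∉
          Ideal.span ((fun w => monomial w (1 : K)) '' (S : Set (Fin n →₀ ℕ))) := by
  set m : Fin n → ℕ := mExp n d q r with hm
  have hqn : q ≤ n := by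
    have h1 : q * (d - 1) ≤ n * (d - 1) :=
      le_trans (Nat.le_add_right _ _) (hqr ▸ hk)
    exact Nat.le_of_mul_le_mul_right h1 (by omega)
  have hr0 : q = n → r = 0 := by
    intro h
    have h1 : q * (d - 1) + r ≤ n * (d - 1) := hqr ▸ hk
    rw [h] at h1
    set t := n * (d - 1)
    omega
  have hmlt : ∀ i : Fin n, m i < d := by
    intro i
    simp only [hm, mExp]
    split_ifs <;> omega
  haveI : DecidableRel (α := Fin n → ℕ) (· ≤ ·) :=
    fun a b => decidable_of_iff _ Pi.le_def.symm
  haveI : Fintype {P : Fin n → ℕ // ∑ i, P i = d} :=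
    Fintype.ofEquiv _ (Sym.equivNatSumOfFintype (Fin n) d)
  set T := Finset.Nat.antidiagonalTuple n d with hT
  set S0 : Finset (Fin n → ℕ) := T.filter (fun a => ¬ a ≤ m) with hS0
  set emb : (Fin n → ℕ) ↪ (Fin n →₀ ℕ) := Finsupp.equivFunOnFinite.symm.toEmbedding
    with hemb
  have hembap : ∀ (a : Fin n → ℕ) (i : Fin n), emb a i = a i := by
    intro a i; simp [hemb]
  refine ⟨S0.map emb, ?_, ?_, ?_, ?_⟩
  · intro v hv
    rw [Finset.mem_map] at hv
    obtain ⟨a, ha, rfl⟩ := hv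
    rw [hS0, Finset.mem_filter] at ha
    have := ha.1
    rw [hT, Finset.Nat.mem_antidiagonalTuple] at this
    simpa [hembap] using this
  · intro i
    rw [Finset.mem_map]
    refine ⟨⇑(Finsupp.single i d), ?_, ?_⟩
    · rw [hS0, Finset.mem_filter]
      constructor
      · rw [hT, Finset.Nat.mem_antidiagonalTuple]
        simp [Finsupp.single_apply, Finset.sum_ite_eq']
      · intro h
        have := h i
        simp only [Finsupp.single_apply, if_pos rfl] at this
        exact absurd (lt_of_le_of_lt this (hmlt i)) (lt_irrefl d)
    · simp [hemb]
  · -- cardinality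
    have hTc : T.card = (n + d - 1).choose d := by
      have h1 : Fintype.card {P : Fin n → ℕ // ∑ i, P i = d} = T.card :=
        Fintype.card_of_subtype T (fun x => Finset.Nat.mem_antidiagonalTuple)
      have h2 : Fintype.card {P : Fin n → ℕ // ∑ i, P i = d}
          = Fintype.card (Sym (Fin n) d) :=
        Fintype.card_congr (Sym.equivNatSumOfFintype (Fin n) d).symm
      rw [← h1, h2, Sym.card_sym_eq_choose]
      simp
    have hCfil : (T.filter (fun a => a ≤ m)).card = Cndk n d q r := by
      have : T.filter (fun a => a ≤ m)
          = (Finset.Iic m).filter (fun a => ∑ i, a i = d) := by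
        ext a
        simp only [Finset.mem_filter, Finset.mem_Iic, hT,
          Finset.Nat.mem_antidiagonalTuple]
        exact ⟨fun h => ⟨h.2, h.1⟩, fun h => ⟨h.2, h.1⟩⟩
      rw [this]; rfl
    have hCle : Cndk n d q r ≤ (n + d - 1).choose d := by
      rw [← hTc, ← hCfil]
      exact Finset.card_filter_le _ _
    rw [Finset.card_map]
    have : S0.card = T.card - (T.filter (fun a => a ≤ m)).card := by
      rw [hS0, Finset.filter_not, Finset.card_sdiff_of_subset (Finset.filter_subset _ _)]
    rw [this, hTc, hCfil, Nndk]
    omega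
  · -- the witness
    refine ⟨emb m, ?_, ?_⟩
    · have hsum : ∑ i : Fin n, m i = k := by
        have hfr : ∑ i : Fin n, m i
            = ∑ i ∈ Finset.range n,
                (if i < q then d - 1 else if i = q then r else 0) :=
          Fin.sum_univ_eq_sum_range
            (fun i => if i < q then d - 1 else if i = q then r else 0) n
        rw [hfr, ← Finset.sum_range_add_sum_Ico _ hqn]
        have h1 : ∑ i ∈ Finset.range q,
            (if i < q then d - 1 else if i = q then r else 0) = q * (d - 1) := by
          rw [Finset.sum_congr rfl (fun i hi => by
            rw [if_pos (Finset.mem_range.mp hi)])]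
          simp [mul_comm]
        have h2 : ∑ i ∈ Finset.Ico q n,
            (if i < q then d - 1 else if i = q then r else 0)
            = if q ∈ Finset.Ico q n then r else 0 := by
          rw [Finset.sum_congr rfl (fun i hi => by
            rw [if_neg (by have := (Finset.mem_Ico.mp hi).1; omega)])]
          exact Finset.sum_ite_eq' _ _ _
        rw [h1, h2]
        rcases eq_or_lt_of_le hqn with he | hlt
        · rw [if_neg (by simp [he]), hqr, hr0 he]
        · rw [if_pos (Finset.mem_Ico.mpr ⟨le_refl q, hlt⟩), hqr]
      simpa [hembap] using hsum
    · intro hmem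
      rw [mem_ideal_span_monomial_image] at hmem
      obtain ⟨s, hs, hle⟩ := hmem (emb m) (by simp [support_monomial])
      rw [Finset.mem_coe, Finset.mem_map] at hs
      obtain ⟨a, ha, rfl⟩ := hs
      rw [hS0, Finset.mem_filter] at ha
      refine ha.2 (fun i => ?_)
      have := hle i
      simpa [hembap] using this
end

section
/- Fix n ≥ 1, d ≥ 2, d ≤ k ≤ n(d−1), and N = N(n,d,k). Let I ⊆ K[x₁,…,x_n] be an ideal generated by N linearly independent homogeneous polynomials of degree d such that (for some fixed monomial order) the leading-term ideal of I contains x₁^d,…,x_n^d. Then I contains every homogeneous polynomial of degree k. -/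
open MvPolynomial

/-- The leading exponent of a polynomial with respect to a monomial order `m`. -/
noncomputable def leadExp {n : ℕ} {K : Type} [Field K] (m : MonomialOrder (Fin n))
    (p : MvPolynomial (Fin n) K) : Fin n →₀ ℕ :=
  m.toSyn.symm (p.support.sup fun v => m.toSyn v)

/-- The leading term ideal `Lt(I)`. -/
noncomputable def ltIdeal {n : ℕ} {K : Type} [Field K] (m : MonomialOrder (Fin n))
    (I : Ideal (MvPolynomial (Fin n) K)) : Ideal (MvPolynomial (Fin n) K) :=
  Ideal.span {q | ∃ p ∈ I, p ≠ 0 ∧ q = monomial (leadExp m p) (1 : K)}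

namespace StmtAux

lemma sum_split {n : ℕ} (i j : Fin n) (hij : i ≠ j) (b : Fin n → ℕ) :
    ∑ l, b l = b i + b j + ∑ l ∈ ((Finset.univ.erase j).erase i), b l := by
  have hj : j ∈ (Finset.univ : Finset (Fin n)) := Finset.mem_univ j
  have hi : i ∈ (Finset.univ.erase j) := Finset.mem_erase.2 ⟨hij, Finset.mem_univ i⟩
  rw [← Finset.add_sum_erase _ b hj, ← Finset.add_sum_erase _ b hi]
  ring

lemma update_sum {n : ℕ} (i j : Fin n) (hij : i ≠ j) (a : Fin n → ℕ) (x y : ℕ) :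
    ∑ l, Function.update (Function.update a i x) j y l
      = x + y + ∑ l ∈ ((Finset.univ.erase j).erase i), a l := by
  rw [sum_split i j hij]
  have h1 : Function.update (Function.update a i x) j y i = x := by
    rw [Function.update_of_ne hij, Function.update_self]
  have h2 : Function.update (Function.update a i x) j y j = y := Function.update_self _ _ _
  rw [h1, h2]
  congr 1
  apply Finset.sum_congr rfl
  intro l hl
  have hli : l ≠ i := (Finset.mem_erase.1 hl).1
  have hlj : l ≠ j := (Finset.mem_erase.1 (Finset.mem_erase.1 hl).2).1
  rw [Function.update_of_ne hlj, Function.update_of_ne hli]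

/-- The exchange inequality: moving a unit from a smaller pile `j` to a (weakly) larger
pile `i` does not increase the number of degree-`d` divisors. -/
lemma divCount_step {n : ℕ} (d : ℕ) (v : Fin n → ℕ) (i j : Fin n) (hij : i ≠ j)
    (h1 : 1 ≤ v j) (h2 : v j ≤ v i) :
    divCount d (Function.update (Function.update v i (v i + 1)) j (v j - 1)) ≤ divCount d v := by
  classical
  set v' := Function.update (Function.update v i (v i + 1)) j (v j - 1) with hv'
  have hv'i : v' i = v i + 1 := by
    rw [hv', Function.update_of_ne hij, Function.update_self]
  have hv'j : v' j = v j - 1 := Function.update_self _ _ _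
  have hv'l : ∀ l, l ≠ i → l ≠ j → v' l = v l := by
    intro l hli hlj
    rw [hv', Function.update_of_ne hlj, Function.update_of_ne hli]
  -- the injection
  set φ : (Fin n → ℕ) → (Fin n → ℕ) := fun a =>
    if a i ≤ v i then a else
      Function.update (Function.update a i (v i + 1 + a j - v j)) j (v j) with hφ
  apply Finset.card_le_card_of_injOn φ
  · -- maps to
    intro a ha
    rw [Finset.mem_coe, Finset.mem_filter, Finset.mem_Iic] at ha ⊢
    obtain ⟨hale, hasum⟩ := ha
    have haj : a j ≤ v j - 1 := by have := hale j; rwa [hv'j] at this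
    have hai : a i ≤ v i + 1 := by have := hale i; rwa [hv'i] at this
    have hal : ∀ l, l ≠ i → l ≠ j → a l ≤ v l := fun l h h' => by
      have := hale l; rwa [hv'l l h h'] at this
    by_cases hc : a i ≤ v i
    · have hφa : φ a = a := by simp [hφ, hc]
      rw [hφa]
      refine ⟨Pi.le_def.2 fun l => ?_, hasum⟩
      by_cases hlj : l = j
      · subst hlj; omega
      · by_cases hli : l = i
        · subst hli; exact hc
        · exact hal l hli hlj
    · have haieq : a i = v i + 1 := by omega
      have hφa : φ a = Function.update (Function.update a i (v i + 1 + a j - v j)) j (v j) := by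
        simp [hφ, hc]
      rw [hφa]
      refine ⟨Pi.le_def.2 fun l => ?_, ?_⟩
      ·
        by_cases hlj : l = j
        · subst hlj; simp [Function.update_self]
        · by_cases hli : l = i
          · subst hli
            rw [Function.update_of_ne hij, Function.update_self]
            omega
          · rw [Function.update_of_ne hlj, Function.update_of_ne hli]
            exact hal l hli hlj
      · rw [update_sum i j hij]
        rw [sum_split i j hij] at hasum
        omega
  · -- injective on
    intro a ha b hb hab
    rw [Finset.mem_coe, Finset.mem_filter, Finset.mem_Iic] at ha hb
    have haj : a j ≤ v j - 1 := by simpa [hv'j] using ha.1 j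
    have hbj : b j ≤ v j - 1 := by simpa [hv'j] using hb.1 j
    have hai : a i ≤ v i + 1 := by simpa [hv'i] using ha.1 i
    have hbi : b i ≤ v i + 1 := by simpa [hv'i] using hb.1 i
    by_cases hca : a i ≤ v i <;> by_cases hcb : b i ≤ v i
    · simpa [hφ, hca, hcb] using hab
    · exfalso
      have : a j = v j := by
        have := congrFun (by simpa [hφ, hca, hcb] using hab) j
        simpa [Function.update_self] using this
      omega
    · exfalso
      have : b j = v j := by
        have := congrFun (by simpa [hφ, hca, hcb] using hab) j
        simpa [Function.update_self] using this.symm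
      omega
    · have hab' := by simpa [hφ, hca, hcb] using hab
      have haieq : a i = v i + 1 := by omega
      have hbieq : b i = v i + 1 := by omega
      funext l
      by_cases hlj : l = j
      · have := congrFun hab' i
        rw [Function.update_of_ne hij, Function.update_self,
            Function.update_of_ne hij, Function.update_self] at this
        subst hlj; omega
      · by_cases hli : l = i
        · subst hli; omega
        · have := congrFun hab' l
          rwa [Function.update_of_ne hlj, Function.update_of_ne hli,
            Function.update_of_ne hlj, Function.update_of_ne hli] at this

lemma divCount_comp_perm {n d : ℕ} (v : Fin n → ℕ) (σ : Equiv.Perm (Fin n)) :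
    divCount d (v ∘ σ) = divCount d v := by
  classical
  apply Finset.card_nbij' (i := fun a => a ∘ σ.symm) (j := fun b => b ∘ σ)
  · intro a ha
    rw [Finset.mem_coe, Finset.mem_filter, Finset.mem_Iic] at ha ⊢
    refine ⟨Pi.le_def.2 fun l => ?_, ?_⟩
    · simpa using Pi.le_def.1 ha.1 (σ.symm l)
    · rw [← ha.2]
      exact Equiv.sum_comp σ.symm a
  · intro b hb
    rw [Finset.mem_coe, Finset.mem_filter, Finset.mem_Iic] at hb ⊢
    refine ⟨Pi.le_def.2 fun l => by simpa using Pi.le_def.1 hb.1 (σ l), ?_⟩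
    · rw [← hb.2]
      exact Equiv.sum_comp σ b
  · intro a _; funext l; simp
  · intro b _; funext l; simp

lemma euclid {D s a t b : ℕ} (h : s * D + a = t * D + b) (ha : a < D) (hb : b < D) :
    s = t ∧ a = b := by
  have hD : 0 < D := by omega
  have h1 : (s * D + a) % D = a := by
    rw [Nat.mul_add_mod' s D a]; exact Nat.mod_eq_of_lt ha
  have h2 : (t * D + b) % D = b := by
    rw [Nat.mul_add_mod' t D b]; exact Nat.mod_eq_of_lt hb
  have hab : a = b := by rw [← h1, ← h2, h]
  subst hab
  have : s * D = t * D := by omega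
  exact ⟨Nat.eq_of_mul_eq_mul_right hD this, rfl⟩

lemma exists_perm_iff {α : Type*} [Fintype α] [DecidableEq α] {p1 p2 : α → Prop}
    [DecidablePred p1] [DecidablePred p2]
    (h : Fintype.card {x // p1 x} = Fintype.card {x // p2 x}) :
    ∃ σ : Equiv.Perm α, ∀ x, p1 (σ x) ↔ p2 x := by
  have h' : Fintype.card {x // ¬ p2 x} = Fintype.card {x // ¬ p1 x} := by
    rw [Fintype.card_subtype_compl, Fintype.card_subtype_compl, h]
  refine ⟨(Equiv.sumCompl p2).symm.trans
    (((Fintype.equivOfCardEq h.symm).sumCongr (Fintype.equivOfCardEq h')).trans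
      (Equiv.sumCompl p1)), fun x => ?_⟩
  by_cases hx : p2 x
  · rw [Equiv.trans_apply, Equiv.sumCompl_symm_apply_of_pos hx]
    simp only [Equiv.trans_apply, Equiv.sumCongr_apply, Sum.map_inl, Equiv.sumCompl_apply_inl]
    exact ⟨fun _ => hx, fun _ => ((Fintype.equivOfCardEq h.symm) ⟨x, hx⟩).2⟩
  · rw [Equiv.trans_apply, Equiv.sumCompl_symm_apply_of_neg hx]
    simp only [Equiv.trans_apply, Equiv.sumCongr_apply, Sum.map_inr, Equiv.sumCompl_apply_inr]
    exact ⟨fun hp => absurd hp ((Fintype.equivOfCardEq h') ⟨x, hx⟩).2, fun hp => absurd hp hx⟩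




/-- Subtype of `Fin n` below `q` has cardinality `q`. -/
lemma card_lt_q {n q : ℕ} (hqn : q ≤ n) : Fintype.card {x : Fin n // (x : ℕ) < q} = q := by
  have e : {x : Fin n // (x : ℕ) < q} ≃ Fin q :=
    { toFun := fun x => ⟨x.1, x.2⟩
      invFun := fun y => ⟨⟨y.1, lt_of_lt_of_le y.2 hqn⟩, y.2⟩
      left_inv := fun x => by ext; rfl
      right_inv := fun y => by ext; rfl }
  rw [Fintype.card_congr e, Fintype.card_fin]

lemma sum_sq_le {n d k : ℕ} (v : Fin n → ℕ) (hsum : ∑ i, v i = k) (hb : ∀ i, v i ≤ d - 1) :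
    ∑ i, (v i) ^ 2 ≤ k * (d - 1) := by
  calc ∑ i, (v i) ^ 2 ≤ ∑ i, v i * (d - 1) := by
        apply Finset.sum_le_sum
        intro i _
        rw [pow_two]
        exact Nat.mul_le_mul_left _ (hb i)
    _ = k * (d - 1) := by rw [← Finset.sum_mul, hsum]

set_option maxHeartbeats 1000000 in
/-- Main combinatorial lemma: among exponent vectors of total degree `k` with all entries
`≤ d-1`, the compressed vector `mExp` minimizes the number of degree-`d` divisors. -/
lemma divCount_min {n d q r k : ℕ} (hd : 2 ≤ d)
    (hr : r < d - 1) (hk : k ≤ n * (d - 1)) (hkqr : k = q * (d - 1) + r) :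
    ∀ v : Fin n → ℕ, (∑ i, v i = k) → (∀ i, v i ≤ d - 1) →
      Cndk n d q r ≤ divCount d v := by
  have hd1 : 1 ≤ d - 1 := by omega
  have hqn : q ≤ n := by
    have : q * (d-1) ≤ n * (d-1) := le_trans (by omega) hk
    exact Nat.le_of_mul_le_mul_right this (by omega)
  have hqn' : r ≠ 0 → q < n := by
    intro hr0
    by_contra hq
    push_neg at hq
    have : n * (d-1) ≤ q * (d-1) := Nat.mul_le_mul_right _ hq
    omega
  suffices H : ∀ t : ℕ, ∀ v : Fin n → ℕ, (∑ i, v i = k) → (∀ i, v i ≤ d - 1) →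
      k * (d - 1) - ∑ i, (v i) ^ 2 = t → Cndk n d q r ≤ divCount d v by
    intro v h1 h2
    exact H _ v h1 h2 rfl
  intro t
  induction t using Nat.strong_induction_on with
  | _ t IH =>
  intro v hsum hb ht
  by_cases hmove : ∃ i j, i ≠ j ∧ 1 ≤ v j ∧ v j ≤ v i ∧ v i ≤ d - 2
  · obtain ⟨i, j, hij, h1, h2, h3⟩ := hmove
    set w := Function.update (Function.update v i (v i + 1)) j (v j - 1) with hw
    have hwi : w i = v i + 1 := by
      rw [hw, Function.update_of_ne hij, Function.update_self]
    have hwj : w j = v j - 1 := Function.update_self _ _ _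
    have hwl : ∀ l, l ≠ i → l ≠ j → w l = v l := by
      intro l hli hlj
      rw [hw, Function.update_of_ne hlj, Function.update_of_ne hli]
    have hsum' : ∑ l, w l = k := by
      rw [hw, update_sum i j hij]
      rw [sum_split i j hij v] at hsum
      omega
    have hb' : ∀ l, w l ≤ d - 1 := by
      intro l
      by_cases hlj : l = j
      · rw [hlj, hwj]; have := hb j; omega
      · by_cases hli : l = i
        · rw [hli, hwi]; omega
        · rw [hwl l hli hlj]; exact hb l
    have hsq : ∑ l, (v l) ^ 2 + 2 ≤ ∑ l, (w l) ^ 2 := by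
      have e1 : ∑ l, (w l) ^ 2
          = (w i)^2 + (w j)^2 + ∑ l ∈ ((Finset.univ.erase j).erase i), (w l)^2 :=
        sum_split i j hij _
      have e2 : ∑ l, (v l) ^ 2
          = (v i)^2 + (v j)^2 + ∑ l ∈ ((Finset.univ.erase j).erase i), (v l)^2 :=
        sum_split i j hij _
      have e3 : ∑ l ∈ ((Finset.univ.erase j).erase i), (w l)^2
          = ∑ l ∈ ((Finset.univ.erase j).erase i), (v l)^2 := by
        apply Finset.sum_congr rfl
        intro l hl
        have hli : l ≠ i := (Finset.mem_erase.1 hl).1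
        have hlj : l ≠ j := (Finset.mem_erase.1 (Finset.mem_erase.1 hl).2).1
        rw [hwl l hli hlj]
      rw [e1, e2, e3, hwi, hwj]
      have hexp : (v j - 1)^2 + 2 * v j = (v j)^2 + 1 := by
        have hvj : v j - 1 + 1 = v j := by omega
        nlinarith [hvj]
      nlinarith [h2]
    have hsq2 : ∑ l, (w l) ^ 2 ≤ k * (d-1) := sum_sq_le w hsum' hb'
    have hsqv : ∑ l, (v l) ^ 2 ≤ k * (d-1) := sum_sq_le v hsum hb
    have hmeas : k * (d - 1) - ∑ l, (w l) ^ 2 < t := by omega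
    calc Cndk n d q r ≤ divCount d w := IH _ hmeas w hsum' hb' rfl
      _ ≤ divCount d v := divCount_step d v i j hij h1 h2
  · -- base case: v is a permutation of mExp
    push_neg at hmove
    have honce : ∀ x y, x ≠ y → 0 < v x → v x < d - 1 → 0 < v y → v y < d - 1 → False := by
      intro x y hxy hx1 hx2 hy1 hy2
      rcases le_total (v y) (v x) with h | h
      · have := hmove x y hxy (by omega) h; omega
      · have := hmove y x (Ne.symm hxy) (by omega) h; omega
    set A := Finset.univ.filter (fun x => v x = d - 1) with hA
    have hvA : ∀ x, x ∈ A ↔ v x = d - 1 := fun x => by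
      rw [hA, Finset.mem_filter]
      exact ⟨fun h => h.2, fun h => ⟨Finset.mem_univ x, h⟩⟩
    set Bs := Finset.univ.filter (fun x => x ∉ A) with hBs
    have hvBs : ∀ x, x ∈ Bs ↔ v x ≠ d - 1 := fun x => by
      rw [hBs, Finset.mem_filter]
      constructor
      · intro h; exact fun hv => h.2 ((hvA x).2 hv)
      · intro h; exact ⟨Finset.mem_univ x, fun hx => h ((hvA x).1 hx)⟩
    have hsumA : ∑ x ∈ A, v x = A.card * (d-1) := by
      rw [Finset.sum_congr rfl (fun x hx => (hvA x).1 hx), Finset.sum_const, smul_eq_mul]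
    have htot : A.card * (d-1) + ∑ x ∈ Bs, v x = k := by
      rw [← hsum, ← hsumA, hBs]
      rw [← Finset.sum_filter_add_sum_filter_not Finset.univ (fun x => x ∈ A) v]
      congr 1
      apply Finset.sum_congr _ (fun x _ => rfl)
      ext x
      simp [Finset.mem_filter]
    -- analyze the remainder
    have hmain : A.card = q ∧ ((∀ x ∈ Bs, v x = 0) ∧ r = 0 ∨
        ∃ g ∈ Bs, v g = r ∧ r ≠ 0 ∧ ∀ x ∈ Bs, x ≠ g → v x = 0) := by
      by_cases hone : ∃ g ∈ Bs, v g ≠ 0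
      · obtain ⟨g, hg, hg0⟩ := hone
        have hgd : v g < d - 1 := by
          have := (hvBs g).1 hg
          have := hb g
          omega
        have hz : ∀ x ∈ Bs, x ≠ g → v x = 0 := by
          intro x hx hxg
          have hxd : v x ≠ d - 1 := (hvBs x).1 hx
          have := hb x
          by_contra h
          exact honce x g hxg (by omega) (by omega) (by omega) hgd
        have hBsum : ∑ x ∈ Bs, v x = v g := Finset.sum_eq_single_of_mem g hg hz
        rw [hBsum] at htot
        obtain ⟨hcq, hvr⟩ := euclid (htot.trans hkqr) hgd hr
        exact ⟨hcq, Or.inr ⟨g, hg, hvr, by omega, hz⟩⟩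
      · push_neg at hone
        have hBsum : ∑ x ∈ Bs, v x = 0 := Finset.sum_eq_zero hone
        rw [hBsum] at htot
        obtain ⟨hcq, hvr⟩ := euclid (htot.trans hkqr) (by omega) hr
        exact ⟨hcq, Or.inl ⟨hone, hvr.symm⟩⟩
    obtain ⟨hAcard, hcases⟩ := hmain
    -- permutation sending positions < q to the (d-1)-positions
    have hcard1 : Fintype.card {x : Fin n // v x = d - 1}
        = Fintype.card {x : Fin n // (x : ℕ) < q} := by
      rw [card_lt_q hqn, Fintype.card_subtype, ← hA, hAcard]
    obtain ⟨σ1, hσ1⟩ := exists_perm_iff hcard1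
    rcases hcases with ⟨hall0, hr0⟩ | ⟨g, hgBs, hgr, hgne, hz⟩
    · -- r = 0 case
      have hvσ : v ∘ ⇑σ1 = mExp n d q r := by
        funext x
        show v (σ1 x) = mExp n d q r x
        by_cases hx : (x : ℕ) < q
        · rw [(hσ1 x).2 hx]
          simp [mExp, hx]
        · have hne : v (σ1 x) ≠ d - 1 := fun h => hx ((hσ1 x).1 h)
          have h0 : v (σ1 x) = 0 := hall0 _ ((hvBs _).2 hne)
          rw [h0]
          simp [mExp, hx, hr0]
      have hdc := divCount_comp_perm (d := d) v σ1
      rw [hvσ] at hdc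
      unfold Cndk
      exact le_of_eq hdc
    · -- r ≠ 0 case
      have hqltn : q < n := hqn' hgne
      set qn : Fin n := ⟨q, hqltn⟩ with hqndef
      set gx := σ1.symm g with hgx
      have hσgx : σ1 gx = g := Equiv.apply_symm_apply σ1 g
      have hgxnotlt : ¬ (gx : ℕ) < q := by
        intro h
        have := (hσ1 gx).2 h
        rw [hσgx] at this
        have := (hvBs g).1 hgBs
        exact this ‹v g = d - 1›
      set σ : Equiv.Perm (Fin n) := (Equiv.swap gx qn).trans σ1 with hσdef
      have hvσ : v ∘ ⇑σ = mExp n d q r := by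
        funext x
        show v (σ1 (Equiv.swap gx qn x)) = mExp n d q r x
        by_cases hx : x = qn
        · rw [hx, Equiv.swap_apply_right, hσgx, hgr]
          simp [mExp, hqndef]
        · by_cases hxg : x = gx
          · rw [hxg, Equiv.swap_apply_left]
            have hqnnotlt : ¬ (qn : ℕ) < q := by simp [hqndef]
            have hne : v (σ1 qn) ≠ d - 1 := fun h => hqnnotlt ((hσ1 qn).1 h)
            have hσqn_ne_g : σ1 qn ≠ g := by
              intro h
              apply hx
              rw [hxg, hgx, ← h, Equiv.symm_apply_apply]
            have h0 : v (σ1 qn) = 0 := hz _ ((hvBs _).2 hne) hσqn_ne_g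
            rw [h0]
            have hgxq : (gx : ℕ) ≠ q := by
              intro h
              exact hx (hxg.trans (Fin.ext h))
            simp [mExp, hgxnotlt, hgxq]
          · rw [Equiv.swap_apply_of_ne_of_ne hxg hx]
            by_cases hxlt : (x : ℕ) < q
            · rw [(hσ1 x).2 hxlt]
              simp [mExp, hxlt]
            · have hne : v (σ1 x) ≠ d - 1 := fun h => hxlt ((hσ1 x).1 h)
              have hσx_ne_g : σ1 x ≠ g := by
                intro h
                exact hxg (by rw [hgx, ← h, Equiv.symm_apply_apply])
              have h0 : v (σ1 x) = 0 := hz _ ((hvBs _).2 hne) hσx_ne_g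
              rw [h0]
              have hxq : (x : ℕ) ≠ q := fun h => hx (Fin.ext h)
              simp [mExp, hxlt, hxq]
      have hdc := divCount_comp_perm (d := d) v σ
      rw [hvσ] at hdc
      unfold Cndk
      exact le_of_eq hdc



variable {n : ℕ} {K : Type} [Field K] (m : MonomialOrder (Fin n))

lemma toSyn_leadExp (f : MvPolynomial (Fin n) K) :
    m.toSyn (leadExp m f) = f.support.sup (fun v => m.toSyn v) := by
  rw [leadExp]
  exact m.toSyn.apply_symm_apply _

lemma leadExp_mem {f : MvPolynomial (Fin n) K} (hf : f ≠ 0) : leadExp m f ∈ f.support := by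
  obtain ⟨b, hb, he⟩ := Finset.exists_mem_eq_sup f.support
    (MvPolynomial.support_nonempty.2 hf) (fun v => m.toSyn v)
  rw [leadExp, he, AddEquiv.symm_apply_apply]
  exact hb

lemma le_leadExp {f : MvPolynomial (Fin n) K} {v : Fin n →₀ ℕ} (hv : v ∈ f.support) :
    m.toSyn v ≤ m.toSyn (leadExp m f) := by
  rw [toSyn_leadExp]
  exact Finset.le_sup hv

lemma coeff_leadExp_ne {f : MvPolynomial (Fin n) K} (hf : f ≠ 0) :
    MvPolynomial.coeff (leadExp m f) f ≠ 0 :=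
  MvPolynomial.mem_support_iff.1 (leadExp_mem m hf)

lemma leadExp_monomial_mul {f : MvPolynomial (Fin n) K} (hf : f ≠ 0) (a : Fin n →₀ ℕ) :
    leadExp m (monomial a (1:K) * f) = a + leadExp m f := by
  have hco : coeff (a + leadExp m f) (monomial a (1:K) * f) = coeff (leadExp m f) f := by
    rw [coeff_monomial_mul, one_mul]
  have hmem : a + leadExp m f ∈ (monomial a (1:K) * f).support :=
    MvPolynomial.mem_support_iff.2 (by rw [hco]; exact coeff_leadExp_ne m hf)
  apply m.toSyn.injective
  apply le_antisymm
  · rw [toSyn_leadExp]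
    apply Finset.sup_le
    intro u hu
    have hcu : coeff u (monomial a (1:K) * f) ≠ 0 := MvPolynomial.mem_support_iff.1 hu
    rw [coeff_monomial_mul'] at hcu
    by_cases hau : a ≤ u
    · rw [if_pos hau, one_mul] at hcu
      have h2 : u - a ∈ f.support := MvPolynomial.mem_support_iff.2 hcu
      have h3 : m.toSyn (u - a) ≤ m.toSyn (leadExp m f) := le_leadExp m h2
      calc m.toSyn u = m.toSyn (a + (u - a)) := by rw [add_tsub_cancel_of_le hau]
        _ = m.toSyn a + m.toSyn (u - a) := map_add _ _ _
        _ ≤ m.toSyn a + m.toSyn (leadExp m f) := add_le_add_right h3 _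
        _ = m.toSyn (a + leadExp m f) := (map_add _ _ _).symm
    · rw [if_neg hau] at hcu
      exact absurd rfl hcu
  · exact le_leadExp m hmem

lemma degree_leadExp {f : MvPolynomial (Fin n) K} {k : ℕ}
    (hf : f ∈ homogeneousSubmodule (Fin n) K k) (h0 : f ≠ 0) :
    (leadExp m f).degree = k := by
  by_contra h
  exact MvPolynomial.mem_support_iff.1 (leadExp_mem m h0)
    (((mem_homogeneousSubmodule _ _).1 hf).coeff_eq_zero h)

/-- degree of a finsupp as a sum over all of `Fin n`. -/
lemma degree_eq_sum_univ (w : Fin n →₀ ℕ) : w.degree = ∑ i, w i :=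
  Finset.sum_subset (Finset.subset_univ _) (fun x _ hx => Finsupp.notMem_support_iff.1 hx)

lemma degree_add_finsupp (a b : Fin n →₀ ℕ) : (a + b).degree = a.degree + b.degree := by
  rw [degree_eq_sum_univ, degree_eq_sum_univ, degree_eq_sum_univ, ← Finset.sum_add_distrib]
  exact Finset.sum_congr rfl (fun x _ => rfl)

lemma degree_tsub {a u : Fin n →₀ ℕ} (h : a ≤ u) : (u - a).degree = u.degree - a.degree := by
  have := degree_add_finsupp a (u - a)
  rw [add_tsub_cancel_of_le h] at this
  omega

lemma degree_mono {a u : Fin n →₀ ℕ} (h : a ≤ u) : a.degree ≤ u.degree := by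
  have := degree_add_finsupp a (u - a)
  rw [add_tsub_cancel_of_le h] at this
  omega

lemma homogComp_monomial_mul (a : Fin n →₀ ℕ) (b : K) (g : MvPolynomial (Fin n) K) (c : ℕ) :
    homogeneousComponent c (monomial a b * g) =
      if a.degree ≤ c then monomial a b * homogeneousComponent (c - a.degree) g else 0 := by
  by_cases hac : a.degree ≤ c
  · rw [if_pos hac]
    ext u
    rw [coeff_homogeneousComponent, coeff_monomial_mul', coeff_monomial_mul']
    by_cases hau : a ≤ u
    · rw [if_pos hau, if_pos hau, coeff_homogeneousComponent]
      have hdd : u.degree = a.degree + (u - a).degree := by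
        rw [← degree_add_finsupp, add_tsub_cancel_of_le hau]
      by_cases hud : u.degree = c
      · rw [if_pos hud, if_pos (by omega)]
      · rw [if_neg hud, if_neg (by omega), mul_zero]
    · rw [if_neg hau, if_neg hau, ite_self]
  · rw [if_neg hac]
    ext u
    rw [coeff_homogeneousComponent, coeff_zero]
    by_cases hud : u.degree = c
    · rw [if_pos hud, coeff_monomial_mul']
      by_cases hau : a ≤ u
      · exact absurd (hud ▸ degree_mono hau) hac
      · rw [if_neg hau]
    · rw [if_neg hud]

lemma homogComp_mem_span {s : Set (MvPolynomial (Fin n) K)} {d : ℕ}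
    (hs : ∀ f ∈ s, f ∈ homogeneousSubmodule (Fin n) K d) :
    ∀ g ∈ Ideal.span s, ∀ c, homogeneousComponent c g ∈ Ideal.span s := by
  intro g hg
  induction hg using Submodule.span_induction with
  | mem x hx =>
    intro c
    rw [homogeneousComponent_of_mem (hs x hx)]
    split
    · exact Ideal.subset_span hx
    · exact Ideal.zero_mem _
  | zero => intro c; rw [map_zero]; exact Ideal.zero_mem _
  | add x y hx hy ihx ihy =>
    intro c
    rw [map_add]
    exact Ideal.add_mem _ (ihx c) (ihy c)
  | smul r x hx ih =>
    intro c
    rw [smul_eq_mul]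
    induction r using MvPolynomial.induction_on' with
    | monomial a b =>
      rw [homogComp_monomial_mul]
      split
      · exact Ideal.mul_mem_left _ _ (ih _)
      · exact Ideal.zero_mem _
    | add r1 r2 ih1 ih2 =>
      rw [add_mul, map_add]
      exact Ideal.add_mem _ ih1 ih2


lemma degree_eq_card_toMultiset {n : ℕ} (v : Fin n →₀ ℕ) :
    v.degree = Multiset.card (Finsupp.toMultiset v) := by
  rw [Finsupp.card_toMultiset]
  rfl

/-- The number of exponent vectors in `Fin n →₀ ℕ` of total degree `d` is `(n+d-1).choose d`. -/
lemma card_degree_eq (n d : ℕ) :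
    ((Finset.Iic ((Finsupp.equivFunOnFinite.symm (fun _ : Fin n => d)) : Fin n →₀ ℕ)).filter
      (fun v => v.degree = d)).card = (n + d - 1).choose d := by
  classical
  set Dfull := ((Finset.Iic ((Finsupp.equivFunOnFinite.symm (fun _ : Fin n => d)) : Fin n →₀ ℕ)).filter
      (fun v => v.degree = d)) with hDfull
  have e : {v // v ∈ Dfull} ≃ Sym (Fin n) d :=
    { toFun := fun v => ⟨Finsupp.toMultiset v.1, by
        rw [← degree_eq_card_toMultiset]
        exact (Finset.mem_filter.1 v.2).2⟩
      invFun := fun s => ⟨Multiset.toFinsupp (s : Multiset (Fin n)), by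
        rw [hDfull, Finset.mem_filter, Finset.mem_Iic]
        constructor
        · rw [Finsupp.le_def]
          intro i
          rw [Multiset.toFinsupp_apply, Finsupp.equivFunOnFinite_symm_apply_apply]
          calc Multiset.count i (s : Multiset (Fin n)) ≤ Multiset.card (s : Multiset (Fin n)) :=
                Multiset.count_le_card _ _
            _ = d := s.2
        · rw [degree_eq_card_toMultiset, Multiset.toFinsupp_toMultiset]
          exact s.2⟩
      left_inv := fun v => Subtype.ext (Finsupp.toMultiset_toFinsupp v.1)
      right_inv := fun s => Subtype.ext (Multiset.toFinsupp_toMultiset _) }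
  rw [← Fintype.card_coe Dfull, Fintype.card_congr e, Sym.card_sym_eq_choose, Fintype.card_fin]

/-- The divisors of `w` of degree `d` (as finsupps) are counted by `divCount`. -/
lemma card_divisors_eq {n : ℕ} (d : ℕ) (w : Fin n →₀ ℕ) :
    ((Finset.Iic w).filter (fun v => v.degree = d)).card = divCount d ⇑w := by
  classical
  apply Finset.card_nbij (i := fun v : Fin n →₀ ℕ => (v : Fin n → ℕ))
  · intro a ha
    rw [Finset.mem_coe, Finset.mem_filter, Finset.mem_Iic] at ha ⊢
    refine ⟨Pi.le_def.2 fun i => Finsupp.le_def.1 ha.1 i, ?_⟩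
    rw [← degree_eq_sum_univ]
    exact ha.2
  · intro a _ b _ hab
    exact DFunLike.coe_injective hab
  · intro b hb
    rw [Finset.mem_coe, Finset.mem_filter, Finset.mem_Iic] at hb
    refine ⟨Finsupp.equivFunOnFinite.symm b, ?_, ?_⟩
    · rw [Finset.mem_coe, Finset.mem_filter, Finset.mem_Iic]
      constructor
      · rw [Finsupp.le_def]
        intro i
        rw [Finsupp.equivFunOnFinite_symm_apply_apply]
        exact Pi.le_def.1 hb.1 i
      · rw [degree_eq_sum_univ]
        have : ∀ i, (Finsupp.equivFunOnFinite.symm b) i = b i :=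
          fun i => Finsupp.equivFunOnFinite_symm_apply_apply b i
        rw [Finset.sum_congr rfl (fun i _ => this i)]
        exact hb.2
    · funext i
      exact Finsupp.equivFunOnFinite_symm_apply_apply b i


end StmtAux

set_option maxHeartbeats 1000000 in
/-- Fix `n ≥ 1`, `d ≥ 2`, `d ≤ k ≤ n(d-1)`, `k = q(d-1)+r`, `0 ≤ r < d-1`, and
`N = N(n,d,k)`. Let `I` be an ideal generated by `N` linearly independent homogeneous
polynomials of degree `d` such that, for some monomial order, `Lt(I)` contains
`x₁^d, …, x_n^d`. Then `I` contains every homogeneous polynomial of degree `k`. -/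
theorem stmt_9 (K : Type) [Field K] (n d k q r : ℕ) (hn : 1 ≤ n) (hd : 2 ≤ d)
    (hdk : d ≤ k) (hk : k ≤ n * (d - 1)) (hqr : k = q * (d - 1) + r) (hr : r < d - 1)
    (p : Fin (Nndk n d q r) → MvPolynomial (Fin n) K)
    (hp : ∀ i, p i ∈ homogeneousSubmodule (Fin n) K d)
    (hli : LinearIndependent K p)
    (m : MonomialOrder (Fin n))
    (hlt : ∀ i : Fin n, (X i : MvPolynomial (Fin n) K) ^ d ∈
      ltIdeal m (Ideal.span (Set.range p))) :
    ∀ f ∈ homogeneousSubmodule (Fin n) K k, f ∈ Ideal.span (Set.range p) := by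
  classical
  open StmtAux in
  set I := Ideal.span (Set.range p) with hI
  set V := Submodule.span K (Set.range p) with hV
  have hVI : ∀ f, f ∈ V → f ∈ I := by
    intro f hf
    have hle : V ≤ Submodule.restrictScalars K I :=
      Submodule.span_le.2 (fun x hx => Ideal.subset_span hx)
    exact hle hf
  have hVhom : ∀ f ∈ V, f ∈ homogeneousSubmodule (Fin n) K d := by
    intro f hf
    have hle : V ≤ homogeneousSubmodule (Fin n) K d :=
      Submodule.span_le.2 (by rintro x ⟨i, rfl⟩; exact hp i)
    exact hle hf
  -- the full set of degree-d exponents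
  set cd : Fin n →₀ ℕ := Finsupp.equivFunOnFinite.symm (fun _ : Fin n => d) with hcd
  set Dfull := (Finset.Iic cd).filter (fun v => v.degree = d) with hDfull
  have hDcard : Dfull.card = (n + d - 1).choose d := StmtAux.card_degree_eq n d
  have hmemDfull : ∀ w : Fin n →₀ ℕ, w.degree = d → w ∈ Dfull := by
    intro w hw
    rw [hDfull, Finset.mem_filter, Finset.mem_Iic]
    refine ⟨Finsupp.le_def.2 fun i => ?_, hw⟩
    have h1 : w i ≤ w.degree := by
      rw [StmtAux.degree_eq_sum_univ]
      exact Finset.single_le_sum (fun _ _ => Nat.zero_le _) (Finset.mem_univ i)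
    have h2 : cd i = d := Finsupp.equivFunOnFinite_symm_apply_apply _ i
    omega
  -- the set of degree-d lead exponents
  set L := Dfull.filter (fun w => ∃ f ∈ V, f ≠ 0 ∧ leadExp m f = w) with hL
  have hLcard : Nndk n d q r ≤ L.card := by
    set Φ : MvPolynomial (Fin n) K →ₗ[K] (↥L → K) :=
      LinearMap.pi (fun w : ↥L => MvPolynomial.lcoeff K (w : Fin n →₀ ℕ)) with hΦ
    have hker : ∀ f, f ∈ V → Φ f = 0 → f = 0 := by
      intro f hfV hf0
      by_contra hne
      have hfh : f ∈ homogeneousSubmodule (Fin n) K d := hVhom f hfV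
      have hwL : leadExp m f ∈ L := by
        rw [hL, Finset.mem_filter]
        exact ⟨hmemDfull _ (StmtAux.degree_leadExp m hfh hne), f, hfV, hne, rfl⟩
      have hco := congrFun hf0 (⟨leadExp m f, hwL⟩ : ↥L)
      rw [hΦ, LinearMap.pi_apply, MvPolynomial.lcoeff_apply] at hco
      exact StmtAux.coeff_leadExp_ne m hne hco
    have hli2 : LinearIndependent K (⇑Φ ∘ p) := by
      apply hli.map
      rw [Submodule.disjoint_def]
      intro x hx hx0
      exact hker x (hV ▸ hx) (LinearMap.mem_ker.1 hx0)
    have hcard := hli2.fintype_card_le_finrank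
    rwa [Module.finrank_fintype_fun_eq_card, Fintype.card_coe, Fintype.card_fin] at hcard
  -- every degree-k exponent is a lead exponent of a nonzero element of I
  have hlead_all : ∀ w : Fin n →₀ ℕ, w.degree = k → ∃ g ∈ I, g ≠ 0 ∧ leadExp m g = w := by
    intro w hw
    have hstep : (∃ e ≤ w, ∃ f ∈ I, f ≠ 0 ∧ leadExp m f = e) →
        ∃ g ∈ I, g ≠ 0 ∧ leadExp m g = w := by
      rintro ⟨e, hew, f, hfI, hf0, rfl⟩
      refine ⟨monomial (w - leadExp m f) 1 * f, Ideal.mul_mem_left _ _ hfI, ?_, ?_⟩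
      · intro h
        have hc := congrArg (coeff ((w - leadExp m f) + leadExp m f)) h
        rw [coeff_monomial_mul, one_mul, coeff_zero] at hc
        exact StmtAux.coeff_leadExp_ne m hf0 hc
      · rw [StmtAux.leadExp_monomial_mul m hf0, tsub_add_cancel_of_le hew]
    apply hstep
    by_cases hbig : ∃ i : Fin n, d ≤ w i
    · obtain ⟨i, hi⟩ := hbig
      have hx := hlt i
      rw [ltIdeal] at hx
      have hset : {q | ∃ p ∈ I, p ≠ 0 ∧ q = monomial (leadExp m p) (1:K)}
          = (fun e => monomial e (1:K)) '' {e | ∃ f ∈ I, f ≠ 0 ∧ leadExp m f = e} := by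
        ext x
        constructor
        · rintro ⟨f, hfI, hf0, rfl⟩
          exact ⟨leadExp m f, ⟨f, hfI, hf0, rfl⟩, rfl⟩
        · rintro ⟨e, ⟨f, hfI, hf0, rfl⟩, rfl⟩
          exact ⟨f, hfI, hf0, rfl⟩
      rw [hset, MvPolynomial.mem_ideal_span_monomial_image] at hx
      have hsupp : Finsupp.single i d ∈ ((X i : MvPolynomial (Fin n) K) ^ d).support := by
        rw [X_pow_eq_monomial, support_monomial, if_neg (one_ne_zero (α := K))]
        exact Finset.mem_singleton_self _
      obtain ⟨e, ⟨f, hfI, hf0, hfe⟩, hele⟩ := hx _ hsupp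
      exact ⟨e, le_trans hele (Finsupp.single_le_iff.2 hi), f, hfI, hf0, hfe⟩
    · push_neg at hbig
      set Dw := (Finset.Iic w).filter (fun v => v.degree = d) with hDw
      have hDwcard : Cndk n d q r ≤ Dw.card := by
        rw [hDw, StmtAux.card_divisors_eq]
        apply StmtAux.divCount_min hd hr hk hqr
        · rw [← StmtAux.degree_eq_sum_univ]; exact hw
        · intro i
          have := hbig i
          omega
      have hDwsub : Dw ⊆ Dfull := by
        intro v hv
        rw [hDw, Finset.mem_filter] at hv
        exact hmemDfull v hv.2
      have hex : ∃ v ∈ Dw, v ∈ L := by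
        by_contra hnone
        push_neg at hnone
        have hdisj : Disjoint Dw L := by
          rw [Finset.disjoint_left]
          intro v hv hvL
          exact hnone v hv hvL
        have hunion : Dw ∪ L ⊆ Dfull := by
          intro v hv
          rcases Finset.mem_union.1 hv with h | h
          · exact hDwsub h
          · exact Finset.filter_subset _ _ h
        have hcards : Dw.card + L.card ≤ Dfull.card := by
          rw [← Finset.card_union_of_disjoint hdisj]
          exact Finset.card_le_card hunion
        have hCle : Cndk n d q r ≤ Dfull.card := le_trans hDwcard (Finset.card_le_card hDwsub)
        rw [hDcard] at hcards hCle
        have hN : Nndk n d q r = (n + d - 1).choose d - Cndk n d q r + 1 := rfl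
        omega
      obtain ⟨v, hvDw, hvL⟩ := hex
      rw [hL, Finset.mem_filter] at hvL
      obtain ⟨-, f, hfV, hf0, hfv⟩ := hvL
      rw [hDw, Finset.mem_filter, Finset.mem_Iic] at hvDw
      exact ⟨v, hvDw.1, f, hVI f hfV, hf0, hfv⟩
  -- final well-founded induction on the lead exponent
  have hspan_hom : ∀ g ∈ Ideal.span (Set.range p), ∀ c,
      homogeneousComponent c g ∈ Ideal.span (Set.range p) :=
    StmtAux.homogComp_mem_span (by rintro x ⟨i, rfl⟩; exact hp i)
  intro f hf
  suffices H : ∀ s : m.syn, ∀ f, m.toSyn (leadExp m f) = s →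
      f ∈ homogeneousSubmodule (Fin n) K k → f ∈ I by
    exact H _ f rfl hf
  clear hf
  intro s
  induction s using WellFoundedLT.induction with
  | _ s IH =>
  intro f hlead hf
  by_cases hf0 : f = 0
  · rw [hf0]; exact Ideal.zero_mem _
  · obtain ⟨g, hgI, hg0, hgw⟩ := hlead_all (leadExp m f) (StmtAux.degree_leadExp m hf hf0)
    set w := leadExp m f with hwdef
    have hwdeg : w.degree = k := StmtAux.degree_leadExp m hf hf0
    set g' := homogeneousComponent k g with hg'
    have hg'I : g' ∈ I := hspan_hom g hgI k
    have hcoeffg' : coeff w g' = coeff w g := by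
      rw [hg', coeff_homogeneousComponent, if_pos hwdeg]
    have hcg'0 : coeff w g' ≠ 0 := by
      rw [hcoeffg', ← hgw]
      exact StmtAux.coeff_leadExp_ne m hg0
    set c := coeff w f / coeff w g' with hc
    set h := f - c • g' with hh
    have hch : coeff w h = 0 := by
      rw [hh, MvPolynomial.coeff_sub, MvPolynomial.coeff_smul, smul_eq_mul, hc,
        div_mul_cancel₀ _ hcg'0, sub_self]
    have hhIf : h ∈ I → f ∈ I := by
      intro hhI
      have hfe : f = h + c • g' := by rw [hh]; ring
      rw [hfe, MvPolynomial.smul_eq_C_mul]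
      exact Ideal.add_mem _ hhI (Ideal.mul_mem_left _ _ hg'I)
    by_cases hh0 : h = 0
    · exact hhIf (hh0 ▸ Ideal.zero_mem _)
    · apply hhIf
      have hhhom : h ∈ homogeneousSubmodule (Fin n) K k :=
        Submodule.sub_mem _ hf (Submodule.smul_mem _ c (homogeneousComponent_mem k g))
      have hsyn_le : ∀ u ∈ h.support, m.toSyn u ≤ m.toSyn w := by
        intro u hu
        have hsub : h.support ⊆ f.support ∪ (c • g').support := by
          rw [hh]; exact MvPolynomial.support_sub _ _ _
        rcases Finset.mem_union.1 (hsub hu) with h1 | h1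
        · exact StmtAux.le_leadExp m h1
        · have h2 : u ∈ g'.support := MvPolynomial.support_smul h1
          have h3 : u ∈ g.support := by
            rw [MvPolynomial.mem_support_iff] at h2 ⊢
            intro hcu
            rw [hg', coeff_homogeneousComponent] at h2
            apply h2
            split
            · exact hcu
            · rfl
          have := StmtAux.le_leadExp m h3
          rwa [hgw] at this
      have hlt : m.toSyn (leadExp m h) < s := by
        rw [← hlead]
        have hle := hsyn_le _ (StmtAux.leadExp_mem m hh0)
        apply lt_of_le_of_ne hle
        intro he
        have : leadExp m h = w := m.toSyn.injective he
        exact StmtAux.coeff_leadExp_ne m hh0 (this ▸ hch)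
      exact IH _ hlt h rfl hhhom
end

section
/- Let I ⊆ ℝ[x,y] be an ideal generated by 3 linearly independent homogeneous cubics such that √I = ⟨x,y⟩. Then I contains all homogeneous polynomials of degree 4, i.e., HF₄(I) = 0. -/
open MvPolynomial

/-- The Hilbert function `HF_t(I) = dim_ℝ (ℝ[x,y]_t / I_t)`. -/
noncomputable def HF (n : ℕ) (I : Ideal (MvPolynomial (Fin n) ℝ)) (t : ℕ) : ℕ :=
  Module.finrank ℝ (↥(homogeneousSubmodule (Fin n) ℝ t) ⧸
    (Submodule.comap (homogeneousSubmodule (Fin n) ℝ t).subtype (Submodule.restrictScalars ℝ I)))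


abbrev R2 := MvPolynomial (Fin 2) ℝ

noncomputable def e2 (a b : ℕ) : Fin 2 →₀ ℕ := Finsupp.single 0 a + Finsupp.single 1 b

lemma e2_apply0 (a b : ℕ) : e2 a b 0 = a := by simp [e2, Finsupp.single_apply]
lemma e2_apply1 (a b : ℕ) : e2 a b 1 = b := by simp [e2, Finsupp.single_apply]

lemma eq_e2 (v : Fin 2 →₀ ℕ) : v = e2 (v 0) (v 1) := by
  ext i; fin_cases i <;> simp [e2, Finsupp.single_apply]

lemma degree_two (v : Fin 2 →₀ ℕ) : v.degree = v 0 + v 1 := by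
  rw [Finsupp.degree_apply, Finset.sum_subset (Finset.subset_univ _)
    (fun i _ hi => Finsupp.notMem_support_iff.mp hi)]
  exact Fin.sum_univ_two v

lemma rep {d : ℕ} {f : R2} (hf : f.IsHomogeneous d) :
    f = ∑ j ∈ Finset.range (d+1), monomial (e2 (d - j) j) (coeff (e2 (d - j) j) f) := by
  apply MvPolynomial.ext; intro v
  rw [coeff_sum]
  by_cases hv : v 0 + v 1 = d
  · rw [Finset.sum_eq_single (v 1)]
    · have hv1 : e2 (d - v 1) (v 1) = v := by
        rw [show d - v 1 = v 0 by omega]; exact (eq_e2 v).symm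
      rw [coeff_monomial, if_pos hv1, hv1]
    · intro j hj hne
      rw [coeff_monomial, if_neg]
      intro h
      exact hne (by simpa [e2_apply1] using DFunLike.congr_fun h 1)
    · intro h; exact absurd (Finset.mem_range.mpr (by omega)) h
  · rw [hf.coeff_eq_zero (by rw [degree_two]; exact hv)]
    symm; apply Finset.sum_eq_zero
    intro j hj
    have hjd := Finset.mem_range.mp hj
    rw [coeff_monomial, if_neg]
    intro h
    have h0 := DFunLike.congr_fun h 0
    have h1 := DFunLike.congr_fun h 1
    simp [e2_apply0, e2_apply1] at h0 h1
    omega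

noncomputable def Phi (d : ℕ) : R2 →ₗ[ℝ] (Fin (d+1) → ℝ) :=
  LinearMap.pi fun j => lcoeff ℝ (e2 (d - (j : ℕ)) (j : ℕ))

noncomputable def Psi (d : ℕ) : (Fin (d+1) → ℝ) →ₗ[ℝ] R2 :=
  ∑ j : Fin (d+1), (monomial (e2 (d - (j : ℕ)) (j : ℕ))).comp (LinearMap.proj j)

lemma Psi_apply (d : ℕ) (w : Fin (d+1) → ℝ) :
    Psi d w = ∑ j : Fin (d+1), monomial (e2 (d - (j : ℕ)) (j : ℕ)) (w j) := by
  simp [Psi, LinearMap.sum_apply]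

lemma Phi_apply (d : ℕ) (f : R2) (j : Fin (d+1)) :
    Phi d f j = coeff (e2 (d - (j : ℕ)) (j : ℕ)) f := rfl

lemma PsiPhi {d : ℕ} {f : R2} (hf : f.IsHomogeneous d) : Psi d (Phi d f) = f := by
  rw [Psi_apply]
  conv_rhs => rw [rep hf]
  rw [← Fin.sum_univ_eq_sum_range (fun j => monomial (e2 (d - j) j) (coeff (e2 (d - j) j) f))]
  rfl

lemma eval_monomial_e2 (u v : ℝ) (a b : ℕ) (r : ℝ) :
    eval ![u, v] (monomial (e2 a b) r) = r * (u ^ a * v ^ b) := by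
  rw [eval_monomial]
  congr 1
  rw [e2, Finsupp.prod_add_index' (fun i => pow_zero _) (fun i m n => pow_add _ _ _)]
  simp [Finsupp.prod_single_index]

lemma Phi4_mono (k : Fin 5) (r : ℝ) :
    Phi 4 (monomial (e2 (4 - (k : ℕ)) (k : ℕ)) r) = Pi.single k r := by
  funext j
  rw [Phi_apply, coeff_monomial, Pi.single_apply]
  by_cases h : j = k
  · subst h; simp
  · rw [if_neg (fun hh => h (Fin.ext (by simpa [e2_apply1] using (DFunLike.congr_fun hh 1).symm))),
      if_neg h]

lemma e2_mul_X0 (a b : ℕ) (r : ℝ) :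
    (X 0 : R2) * monomial (e2 a b) r = monomial (e2 (a+1) b) r := by
  have h : Finsupp.single 0 1 + e2 a b = e2 (a+1) b := by
    ext i; fin_cases i <;> simp [e2, Finsupp.single_apply] <;> omega
  rw [X, monomial_mul, one_mul, h]

lemma e2_mul_X1 (a b : ℕ) (r : ℝ) :
    (X 1 : R2) * monomial (e2 a b) r = monomial (e2 a (b+1)) r := by
  have h : Finsupp.single 1 1 + e2 a b = e2 a (b+1) := by
    ext i; fin_cases i <;> simp [e2, Finsupp.single_apply] <;> omega
  rw [X, monomial_mul, one_mul, h]

lemma mem_orth_span {ι : Type*} {E : Type*} [NormedAddCommGroup E] [InnerProductSpace ℝ E]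
    (C : ι → E) (α : E) (h : ∀ i, (inner ℝ (C i) α : ℝ) = 0) :
    α ∈ (Submodule.span ℝ (Set.range C))ᗮ := by
  rw [Submodule.mem_orthogonal]
  intro u hu
  induction hu using Submodule.span_induction with
  | mem x hx => obtain ⟨i, rfl⟩ := hx; exact h i
  | zero => exact inner_zero_left _
  | add x y _ _ hx hy => rw [inner_add_left, hx, hy, add_zero]
  | smul r x _ hx => rw [real_inner_smul_left, hx, mul_zero]

lemma collinear {E : Type*} [AddCommGroup E] [Module ℝ E] {K : Submodule ℝ E}
    [FiniteDimensional ℝ ↥K] (hK : Module.finrank ℝ K = 1) {x y : E}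
    (hx : x ∈ K) (hy : y ∈ K) (hx0 : x ≠ 0) : ∃ r : ℝ, y = r • x := by
  have hle : Submodule.span ℝ {x} ≤ K := by rwa [Submodule.span_singleton_le_iff_mem]
  have heq : Submodule.span ℝ {x} = K :=
    Submodule.eq_of_le_of_finrank_le hle (by rw [hK, finrank_span_singleton hx0])
  obtain ⟨r, hr⟩ := Submodule.mem_span_singleton.mp (heq ▸ hy)
  exact ⟨r, hr.symm⟩

lemma single_eq (k : Fin 5) (r : ℝ) :
    Pi.single k r = r • fun j => if k = j then (1:ℝ) else 0 := by
  funext j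
  by_cases h : j = k
  · subst h; simp
  · rw [Pi.single_apply, if_neg h, Pi.smul_apply, if_neg (fun hh => h hh.symm), smul_zero]

lemma v40 : ((0 : Fin 4) : ℕ) = 0 := rfl
lemma v41 : ((1 : Fin 4) : ℕ) = 1 := rfl
lemma v42 : ((2 : Fin 4) : ℕ) = 2 := rfl
lemma v43 : ((3 : Fin 4) : ℕ) = 3 := rfl

lemma orth_line {c : Fin 3 → Fin 4 → ℝ} (hc : LinearIndependent ℝ c)
    {x y : Fin 4 → ℝ} (hx : ∀ i, ∑ j : Fin 4, c i j * x j = 0)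
    (hy : ∀ i, ∑ j : Fin 4, c i j * y j = 0) (hx0 : x ≠ 0) : ∃ r : ℝ, y = r • x := by
  let C : Fin 3 → EuclideanSpace ℝ (Fin 4) := fun i => WithLp.toLp 2 (c i)
  have hCli : LinearIndependent ℝ C :=
    hc.map' (WithLp.linearEquiv 2 ℝ (Fin 4 → ℝ)).symm.toLinearMap (LinearEquiv.ker _)
  have hinner : ∀ (i : Fin 3) (w : EuclideanSpace ℝ (Fin 4)),
      (inner ℝ (C i) w : ℝ) = ∑ j : Fin 4, c i j * w j := by
    intro i w
    rw [PiLp.inner_apply]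
    simp [RCLike.inner_apply, conj_trivial]
    exact Finset.sum_congr rfl fun j _ => mul_comm _ _
  have hfr : Module.finrank ℝ (Submodule.span ℝ (Set.range C)) = 3 := by
    rw [finrank_span_eq_card hCli]
    simp
  have hKfr : Module.finrank ℝ ((Submodule.span ℝ (Set.range C))ᗮ) = 1 := by
    have h := Submodule.finrank_add_finrank_orthogonal (K := Submodule.span ℝ (Set.range C))
    rw [hfr, finrank_euclideanSpace_fin] at h
    omega
  have hxm : (WithLp.toLp 2 x : EuclideanSpace ℝ (Fin 4)) ∈ (Submodule.span ℝ (Set.range C))ᗮ :=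
    mem_orth_span C (WithLp.toLp 2 x) (fun i => by rw [hinner]; exact hx i)
  have hym : (WithLp.toLp 2 y : EuclideanSpace ℝ (Fin 4)) ∈ (Submodule.span ℝ (Set.range C))ᗮ :=
    mem_orth_span C (WithLp.toLp 2 y) (fun i => by rw [hinner]; exact hy i)
  obtain ⟨r, hr⟩ := collinear hKfr hxm hym (fun h => hx0 (congrArg WithLp.ofLp h))
  exact ⟨r, congrArg WithLp.ofLp hr⟩

/-- If `I ⊆ ℝ[x,y]` is generated by 3 linearly independent homogeneous cubics with
`√I = ⟨x,y⟩`, then `I` contains all homogeneous quartics, i.e. `HF₄(I) = 0`. -/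
theorem stmt_13 (p : Fin 3 → MvPolynomial (Fin 2) ℝ)
    (hp : ∀ i, p i ∈ homogeneousSubmodule (Fin 2) ℝ 3)
    (hli : LinearIndependent ℝ p)
    (hrad : (Ideal.span (Set.range p)).radical
      = Ideal.span {(X 0 : MvPolynomial (Fin 2) ℝ), X 1}) :
    (∀ f ∈ homogeneousSubmodule (Fin 2) ℝ 4, f ∈ Ideal.span (Set.range p)) ∧
    HF 2 (Ideal.span (Set.range p)) 4 = 0 := by
  classical
  have hhom : ∀ i, (p i).IsHomogeneous 3 := fun i => (mem_homogeneousSubmodule _ _).mp (hp i)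
  -- final contradiction helper: no common nonzero zero of the p i
  have final : ∀ u v : ℝ, (u ≠ 0 ∨ v ≠ 0) → (∀ i, eval ![u, v] (p i) = 0) → False := by
    intro u v huv hz
    have hzero : ∀ g ∈ Ideal.span (Set.range p), eval ![u, v] g = 0 := by
      intro g hg
      induction hg using Submodule.span_induction with
      | mem f hf => obtain ⟨i, rfl⟩ := hf; exact hz i
      | zero => exact map_zero _
      | add f g _ _ hf hg => rw [map_add, hf, hg, add_zero]
      | smul r f _ hf => rw [smul_eq_mul, map_mul, hf, mul_zero]
    have hX0 : (X 0 : R2) ∈ (Ideal.span (Set.range p)).radical := by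
      rw [hrad]; exact Ideal.subset_span (by simp)
    have hX1 : (X 1 : R2) ∈ (Ideal.span (Set.range p)).radical := by
      rw [hrad]; exact Ideal.subset_span (by simp)
    rw [Ideal.mem_radical_iff] at hX0 hX1
    obtain ⟨N, hN⟩ := hX0
    obtain ⟨M, hM⟩ := hX1
    have hu : u = 0 := by
      have h0 := hzero _ hN
      rw [map_pow, eval_X] at h0
      simp only [Matrix.cons_val_zero] at h0
      rcases Nat.eq_zero_or_pos N with h | h
      · subst h; norm_num at h0
      · exact pow_eq_zero_iff h.ne' |>.mp h0
    have hv : v = 0 := by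
      have h0 := hzero _ hM
      rw [map_pow, eval_X] at h0
      simp only [Matrix.cons_val_one, Matrix.head_cons] at h0
      rcases Nat.eq_zero_or_pos M with h | h
      · subst h; norm_num at h0
      · exact pow_eq_zero_iff h.ne' |>.mp h0
    rcases huv with h | h
    · exact h hu
    · exact h hv
  -- coefficient vectors
  set cc : Fin 3 → Fin 4 → ℝ := fun i => Phi 3 (p i) with hccdef
  have rep3 : ∀ i, p i = ∑ j : Fin 4, monomial (e2 (3 - (j : ℕ)) (j : ℕ)) (cc i j) := by
    intro i
    conv_lhs => rw [← PsiPhi (hhom i)]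
    rw [Psi_apply]
  -- the six quartic generators
  set Q : Fin 2 × Fin 3 → (Fin 5 → ℝ) := fun li => Phi 4 (X li.1 * p li.2) with hQdef
  have hX0p : ∀ i, X 0 * p i
      = ∑ j : Fin 4, monomial (e2 (4 - ((j.castSucc : Fin 5) : ℕ)) ((j.castSucc : Fin 5) : ℕ)) (cc i j) := by
    intro i
    rw [rep3 i, Finset.mul_sum]
    refine Finset.sum_congr rfl fun j _ => ?_
    rw [e2_mul_X0, show (3 - (j:ℕ) + 1) = 4 - (j:ℕ) from by have := j.isLt; omega]
    simp [Fin.coe_castSucc]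
  have hX1p : ∀ i, X 1 * p i
      = ∑ j : Fin 4, monomial (e2 (4 - ((j.succ : Fin 5) : ℕ)) ((j.succ : Fin 5) : ℕ)) (cc i j) := by
    intro i
    rw [rep3 i, Finset.mul_sum]
    refine Finset.sum_congr rfl fun j _ => ?_
    rw [e2_mul_X1, show ((j:ℕ) + 1) = ((j.succ : Fin 5) : ℕ) from (Fin.val_succ j).symm,
      show (3 - (j:ℕ)) = 4 - ((j.succ : Fin 5) : ℕ) from by rw [Fin.val_succ]; omega]
  have hQ0 : ∀ i, Q (0, i) = ∑ j : Fin 4, Pi.single j.castSucc (cc i j) := by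
    intro i
    rw [hQdef]
    show Phi 4 (X 0 * p i) = _
    rw [hX0p i, map_sum]
    exact Finset.sum_congr rfl fun j _ => Phi4_mono j.castSucc (cc i j)
  have hQ1 : ∀ i, Q (1, i) = ∑ j : Fin 4, Pi.single j.succ (cc i j) := by
    intro i
    rw [hQdef]
    show Phi 4 (X 1 * p i) = _
    rw [hX1p i, map_sum]
    exact Finset.sum_congr rfl fun j _ => Phi4_mono j.succ (cc i j)
  have hspan : Submodule.span ℝ (Set.range Q) = ⊤ := by
    by_contra hne
    obtain ⟨φ, hφ0, hφmap⟩ := Submodule.exists_dual_map_eq_bot_of_lt_top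
      (lt_top_iff_ne_top.mpr hne) inferInstance
    set b : Fin 5 → ℝ := fun k => φ (fun j => if k = j then 1 else 0) with hbdef
    have hsingle : ∀ (k : Fin 5) (r : ℝ), φ (Pi.single k r) = r * b k := by
      intro k r
      rw [single_eq, map_smul, smul_eq_mul]
    have hφQ : ∀ li, φ (Q li) = 0 := by
      intro li
      have h : φ (Q li) ∈ Submodule.map φ (Submodule.span ℝ (Set.range Q)) :=
        Submodule.mem_map_of_mem (Submodule.subset_span ⟨li, rfl⟩)
      rw [hφmap] at h
      simpa using h
    have hbne : b ≠ 0 := by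
      intro h
      apply hφ0
      refine LinearMap.ext fun x => ?_
      rw [LinearMap.pi_apply_eq_sum_univ φ x]
      simp only [LinearMap.zero_apply]
      refine Finset.sum_eq_zero fun k _ => ?_
      rw [show φ (fun j => if k = j then (1:ℝ) else 0) = b k from rfl, congrFun h k]
      simp
    have hc0 : ∀ i, ∑ j : Fin 4, cc i j * b j.castSucc = 0 := by
      intro i
      have h := hφQ (0, i)
      rw [hQ0 i, map_sum] at h
      simpa [hsingle] using h
    have hc1 : ∀ i, ∑ j : Fin 4, cc i j * b j.succ = 0 := by
      intro i
      have h := hφQ (1, i)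
      rw [hQ1 i, map_sum] at h
      simpa [hsingle] using h
    have hccli : LinearIndependent ℝ cc := by
      have h : Psi 3 ∘ cc = p := by
        funext i
        exact PsiPhi (hhom i)
      exact LinearIndependent.of_comp (Psi 3) (by rw [h]; exact hli)
    by_cases hα0 : (fun j : Fin 4 => b j.castSucc) = (0 : Fin 4 → ℝ)
    · have hbc : ∀ j : Fin 4, b j.castSucc = 0 := fun j => congrFun hα0 j
      have hb4 : b 4 ≠ 0 := by
        intro h4
        apply hbne
        funext k
        by_cases hk : (k : ℕ) < 4
        · have hke : k = Fin.castSucc ⟨(k : ℕ), hk⟩ := Fin.ext rfl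
          rw [hke, hbc]
          simp
        · have hke : k = 4 := Fin.ext (by have := k.isLt; omega)
          rw [hke, h4]
          simp
      have hcc3 : ∀ i, cc i 3 = 0 := by
        intro i
        have h := hc1 i
        rw [Fin.sum_univ_four] at h
        have ee0 : (0 : Fin 4).succ = Fin.castSucc 1 := by decide
        have ee1 : (1 : Fin 4).succ = Fin.castSucc 2 := by decide
        have ee2 : (2 : Fin 4).succ = Fin.castSucc 3 := by decide
        have ee3 : (3 : Fin 4).succ = (4 : Fin 5) := by decide
        rw [ee0, ee1, ee2, ee3, hbc 1, hbc 2, hbc 3] at h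
        simp only [mul_zero, zero_add, add_zero] at h
        rcases mul_eq_zero.mp h with h' | h'
        · exact h'
        · exact absurd h' hb4
      refine final 0 1 (Or.inr one_ne_zero) (fun i => ?_)
      rw [rep3 i, map_sum, Fin.sum_univ_four]
      simp only [eval_monomial_e2, v40, v41, v42, v43]
      norm_num [hcc3 i]
    · obtain ⟨r, hβr⟩ := orth_line hccli (x := fun j : Fin 4 => b j.castSucc)
        (y := fun j : Fin 4 => b j.succ) (fun i => by simpa using hc0 i)
        (fun i => by simpa using hc1 i) hα0
      have hrec : ∀ j : Fin 4, b j.succ = r * b j.castSucc := by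
        intro j
        have h := congrFun hβr j
        simpa using h
      have key : ∀ n (h : n < 5), b ⟨n, h⟩ = b 0 * r ^ n := by
        intro n
        induction n with
        | zero => intro h; simp [show (⟨0, h⟩ : Fin 5) = 0 from rfl]
        | succ m ih =>
          intro h
          have hm4 : m < 4 := by omega
          have hs := hrec ⟨m, hm4⟩
          have ee1 : (⟨m, hm4⟩ : Fin 4).succ = ⟨m + 1, h⟩ := rfl
          have ee2 : (⟨m, hm4⟩ : Fin 4).castSucc = ⟨m, by omega⟩ := rfl
          rw [ee1, ee2] at hs
          rw [hs, ih (by omega), pow_succ]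
          ring
      have hval : ∀ k : Fin 5, b k = b 0 * r ^ (k : ℕ) := by
        intro k
        have h := key k.1 k.2
        simpa using h
      have hb0 : b 0 ≠ 0 := by
        intro h0
        apply hbne
        funext k
        rw [hval k, h0, zero_mul]
        simp
      refine final 1 r (Or.inl one_ne_zero) (fun i => ?_)
      have hb : ∀ j : Fin 4, b j.castSucc = b 0 * r ^ (j : ℕ) := by
        intro j
        rw [hval]
        simp [Fin.coe_castSucc]
      have h := hc0 i
      rw [Fin.sum_univ_four, hb 0, hb 1, hb 2, hb 3] at h
      simp only [v40, v41, v42, v43] at h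
      have hS : cc i 0 + cc i 1 * r + cc i 2 * r ^ 2 + cc i 3 * r ^ 3 = 0 := by
        have hfac : b 0 * (cc i 0 + cc i 1 * r + cc i 2 * r ^ 2 + cc i 3 * r ^ 3) = 0 := by
          linear_combination h
        rcases mul_eq_zero.mp hfac with h' | h'
        · exact absurd h' hb0
        · exact h'
      rw [rep3 i, map_sum, Fin.sum_univ_four]
      simp only [eval_monomial_e2, v40, v41, v42, v43]
      norm_num
      linear_combination hS
  -- first conclusion
  have main : ∀ f ∈ homogeneousSubmodule (Fin 2) ℝ 4, f ∈ Ideal.span (Set.range p) := by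
    intro f hf
    have hf4 : f.IsHomogeneous 4 := (mem_homogeneousSubmodule _ _).mp hf
    have h1 : Phi 4 f ∈ Submodule.span ℝ (Set.range Q) := by rw [hspan]; trivial
    have h2 : Psi 4 (Phi 4 f) ∈ Submodule.map (Psi 4) (Submodule.span ℝ (Set.range Q)) :=
      Submodule.mem_map_of_mem h1
    rw [Submodule.map_span] at h2
    have h3 : Submodule.span ℝ (Psi 4 '' Set.range Q)
        ≤ Submodule.restrictScalars ℝ (Ideal.span (Set.range p)) := by
      rw [Submodule.span_le]
      rintro _ ⟨_, ⟨⟨l, i⟩, rfl⟩, rfl⟩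
      have hQh : Q (l, i) = Phi 4 (X l * p i) := rfl
      have hmul : (X l * p i).IsHomogeneous 4 := by
        have := (isHomogeneous_X ℝ l).mul (hhom i)
        norm_num at this
        exact this
      rw [hQh, PsiPhi hmul]
      exact Ideal.mul_mem_left _ _ (Ideal.subset_span ⟨i, rfl⟩)
    have h4 := h3 h2
    rwa [PsiPhi hf4] at h4
  refine ⟨main, ?_⟩
  have htop : (Submodule.comap (homogeneousSubmodule (Fin 2) ℝ 4).subtype
      (Submodule.restrictScalars ℝ (Ideal.span (Set.range p)))) = ⊤ := by
    rw [Submodule.eq_top_iff']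
    intro x
    exact main x x.2
  rw [HF, htop]
  haveI : Subsingleton (↥(homogeneousSubmodule (Fin 2) ℝ 4) ⧸
      (⊤ : Submodule ℝ ↥(homogeneousSubmodule (Fin 2) ℝ 4))) :=
    Submodule.Quotient.subsingleton_iff.mpr rfl
  exact Module.finrank_zero_of_subsingleton
end
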